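/- arXiv:1504.06340 — 12 statements merged into one kernel-verified Lean document; each statement's English description precedes it below -/
import Mathlib

section
/- Let N ≥ 1, let L_1, …, L_N > 0, and let f_1, …, f_N : ℝ → ℝ be differentiable with each derivative f_i' Lipschitz continuous with constant L_i; set f(x) = Σ_{i=1}^N f_i(x_i). Let 𝒩 ⊆ {1,…,N} be nonempty, let x ∈ ℝ^N, and define d ∈ ℝ^N by d_i = (1/L_i) · (Σ_{j∈𝒩} (1/L_j)(f_j'(x_j) − f_i'(x_i))) / (Σ_{j∈𝒩} 1/L_j) for i ∈ 𝒩 and d_i = 0 for i ∉ 𝒩. Then f(x + d) ≤ f(x) − (1/2) ∇f(x)ᵀ G_𝒩 ∇f(x), where ∇f(x) = (f_1'(x_1), …, f_N'(x_N)). -/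
/-- The matrix `G_𝒩` with entries
`(G_𝒩)_{ij} = (1/L_i)·δ_{ij} − (1/(L_i L_j))/(∑_{k∈𝒩} 1/L_k)` for `i,j ∈ 𝒩`
and `0` otherwise. -/
noncomputable def GNmat (N : ℕ) (L : Fin N → ℝ) (𝒩 : Finset (Fin N)) :
    Matrix (Fin N) (Fin N) ℝ :=
  Matrix.of fun i j =>
    if i ∈ 𝒩 ∧ j ∈ 𝒩 then
      (if i = j then 1 / L i else 0) - (1 / (L i * L j)) / (∑ k ∈ 𝒩, 1 / L k)
    else 0

lemma descent_aux (f : ℝ → ℝ) (L : ℝ) (hdiff : Differentiable ℝ f)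
    (hlip : ∀ a b : ℝ, |deriv f a - deriv f b| ≤ L * |a - b|) (x d : ℝ) :
    f (x + d) ≤ f x + deriv f x * d + L / 2 * d ^ 2 := by
  set φ : ℝ → ℝ := fun t => f (x + t * d) - deriv f x * d * t - L / 2 * d ^ 2 * t ^ 2 with hφ
  have hder : ∀ t : ℝ,
      HasDerivAt φ (deriv f (x + t * d) * d - deriv f x * d - L * d ^ 2 * t) t := by
    intro t
    have h1 : HasDerivAt (fun t : ℝ => x + t * d) d t := by
      simpa using ((hasDerivAt_id t).mul_const d).const_add x
    have h2 : HasDerivAt (fun t : ℝ => f (x + t * d)) (deriv f (x + t * d) * d) t :=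
      ((hdiff (x + t * d)).hasDerivAt).comp t h1
    have h3 : HasDerivAt (fun t : ℝ => deriv f x * d * t) (deriv f x * d) t := by
      simpa using (hasDerivAt_id t).const_mul (deriv f x * d)
    have h4 : HasDerivAt (fun t : ℝ => L / 2 * d ^ 2 * t ^ 2) (L / 2 * d ^ 2 * (2 * t)) t := by
      simpa using (hasDerivAt_pow 2 t).const_mul (L / 2 * d ^ 2)
    have := (h2.sub h3).sub h4
    exact this.congr_deriv (by ring)
  have hcont : Continuous φ := by
    have : Differentiable ℝ φ := fun t => (hder t).differentiableAt
    exact this.continuous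
  have hanti : AntitoneOn φ (Set.Icc 0 1) := by
    apply antitoneOn_of_deriv_nonpos (convex_Icc 0 1) hcont.continuousOn
    · intro t _
      exact (hder t).differentiableAt.differentiableWithinAt
    · intro t ht
      rw [interior_Icc] at ht
      rw [(hder t).deriv]
      have h := hlip (x + t * d) x
      have hx : |x + t * d - x| = t * |d| := by
        rw [show x + t * d - x = t * d by ring, abs_mul, abs_of_pos ht.1]
      rw [hx] at h
      have h1 : (deriv f (x + t * d) - deriv f x) * d
          ≤ |deriv f (x + t * d) - deriv f x| * |d| := by
        calc (deriv f (x + t * d) - deriv f x) * d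
            ≤ |(deriv f (x + t * d) - deriv f x) * d| := le_abs_self _
          _ = _ := abs_mul _ _
      have h2 : |deriv f (x + t * d) - deriv f x| * |d| ≤ L * (t * |d|) * |d| :=
        mul_le_mul_of_nonneg_right h (abs_nonneg d)
      have h3 : L * (t * |d|) * |d| = L * d ^ 2 * t := by
        rw [show L * (t * |d|) * |d| = L * (|d| * |d|) * t by ring, ← abs_mul, abs_mul_self]
        ring
      nlinarith
  have h01 := hanti (Set.mem_Icc.2 ⟨le_refl 0, zero_le_one⟩)
    (Set.mem_Icc.2 ⟨zero_le_one, le_refl 1⟩) zero_le_one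
  simp only [hφ] at h01
  norm_num at h01
  linarith

/-- The coordinate descent step along `𝒩` decreases the objective
by at least `(1/2) ∇f(x)ᵀ G_𝒩 ∇f(x)`. -/
theorem stmt_3 (N : ℕ) (hN : 1 ≤ N) (L : Fin N → ℝ) (hL : ∀ i, 0 < L i)
    (f : Fin N → ℝ → ℝ) (hdiff : ∀ i, Differentiable ℝ (f i))
    (hlip : ∀ i, ∀ a b : ℝ, |deriv (f i) a - deriv (f i) b| ≤ L i * |a - b|)
    (𝒩 : Finset (Fin N)) (h𝒩 : 𝒩.Nonempty) (x : Fin N → ℝ)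
    (d : Fin N → ℝ)
    (hd : ∀ i ∈ 𝒩, d i = (1 / L i) *
      ((∑ j ∈ 𝒩, (1 / L j) * (deriv (f j) (x j) - deriv (f i) (x i))) /
        (∑ j ∈ 𝒩, 1 / L j)))
    (hd0 : ∀ i ∉ 𝒩, d i = 0) :
    ∑ i, f i (x i + d i) ≤ ∑ i, f i (x i)
      - (1 / 2) * ∑ i, ∑ j,
          deriv (f i) (x i) * GNmat N L 𝒩 i j * deriv (f j) (x j) := by
  set g : Fin N → ℝ := fun i => deriv (f i) (x i) with hg
  have hSpos : 0 < ∑ j ∈ 𝒩, 1 / L j :=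
    Finset.sum_pos (fun j _ => one_div_pos.2 (hL j)) h𝒩
  set S : ℝ := ∑ j ∈ 𝒩, 1 / L j with hS
  set A : ℝ := ∑ j ∈ 𝒩, g j / L j with hA
  -- closed form for d
  have hd' : ∀ i ∈ 𝒩, d i = (A - S * g i) / (L i * S) := by
    intro i hi
    have hsum : ∑ j ∈ 𝒩, (1 / L j) * (g j - g i) = A - S * g i := by
      simp only [mul_sub]
      rw [Finset.sum_sub_distrib, ← Finset.sum_mul]
      congr 1
      · exact Finset.sum_congr rfl fun j _ => by ring
    rw [hd i hi, hsum]
    have := (hL i).ne'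
    field_simp
  -- quadratic form identity
  have hQ : ∑ i, ∑ j, g i * GNmat N L 𝒩 i j * g j
      = (∑ i ∈ 𝒩, g i ^ 2 / L i) - A ^ 2 / S := by
    have h1 : ∑ i, ∑ j, g i * GNmat N L 𝒩 i j * g j
        = ∑ i ∈ 𝒩, ∑ j ∈ 𝒩, g i * GNmat N L 𝒩 i j * g j := by
      rw [← Finset.sum_subset (Finset.subset_univ 𝒩)]
      · apply Finset.sum_congr rfl
        intro i hi
        rw [← Finset.sum_subset (Finset.subset_univ 𝒩)]
        intro j _ hj
        simp [GNmat, hj]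
      · intro i _ hi
        apply Finset.sum_eq_zero
        intro j _
        simp [GNmat, hi]
    rw [h1]
    have h2 : ∀ i ∈ 𝒩, ∑ j ∈ 𝒩, g i * GNmat N L 𝒩 i j * g j
        = g i ^ 2 / L i - (g i / L i) * (∑ j ∈ 𝒩, g j / L j) / (∑ k ∈ 𝒩, 1 / L k) := by
      intro i hi
      have : ∀ j ∈ 𝒩, g i * GNmat N L 𝒩 i j * g j
          = (if i = j then g i * g j / L i else 0)
            - (g i / L i) * (g j / L j) / (∑ k ∈ 𝒩, 1 / L k) := by
        intro j hj
        simp only [GNmat, Matrix.of_apply, hi, hj, and_self, if_true]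
        by_cases h : i = j <;> simp [h] <;> ring
      rw [Finset.sum_congr rfl this, Finset.sum_sub_distrib, Finset.sum_ite_eq 𝒩 i, if_pos hi]
      congr 1
      · ring
      · rw [← Finset.sum_div, ← Finset.mul_sum]
    rw [Finset.sum_congr rfl h2, Finset.sum_sub_distrib]
    congr 1
    rw [← Finset.sum_div, ← Finset.sum_mul, hA, hS, sq]
  -- descent bound summed
  have hsum : ∑ i, f i (x i + d i)
      ≤ ∑ i, f i (x i) + ∑ i, (g i * d i + L i / 2 * (d i) ^ 2) := by
    rw [← Finset.sum_add_distrib]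
    apply Finset.sum_le_sum
    intro i _
    have := descent_aux (f i) (L i) (hdiff i) (hlip i) (x i) (d i)
    simp only [hg]
    linarith
  -- evaluate the quadratic-step sum
  have hT : ∑ i, (g i * d i + L i / 2 * (d i) ^ 2)
      = A ^ 2 / (2 * S) - (1 / 2) * ∑ i ∈ 𝒩, g i ^ 2 / L i := by
    have h1 : ∑ i, (g i * d i + L i / 2 * (d i) ^ 2)
        = ∑ i ∈ 𝒩, (g i * d i + L i / 2 * (d i) ^ 2) := by
      rw [← Finset.sum_subset (Finset.subset_univ 𝒩)]
      intro i _ hi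
      rw [hd0 i hi]
      ring
    rw [h1]
    have h2 : ∀ i ∈ 𝒩, g i * d i + L i / 2 * (d i) ^ 2
        = A ^ 2 / (2 * S ^ 2) * (1 / L i) - (1 / 2) * (g i ^ 2 / L i) := by
      intro i hi
      rw [hd' i hi]
      have hLi := (hL i).ne'
      have hSne := hSpos.ne'
      field_simp
      ring
    rw [Finset.sum_congr rfl h2, Finset.sum_sub_distrib, ← Finset.mul_sum, ← Finset.mul_sum,
      ← hS]
    have hSne := hSpos.ne'
    field_simp
  rw [hQ] at *
  calc ∑ i, f i (x i + d i) ≤ _ := hsum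
    _ = _ := by rw [hT]; ring
end

section
/- Let N ≥ 1, L_1, …, L_N > 0, and let f_1, …, f_N : ℝ → ℝ be differentiable with each derivative f_i' Lipschitz continuous with constant L_i; set f(x) = Σ_{i=1}^N f_i(x_i). Let 𝒩_1, …, 𝒩_m be nonempty subsets of {1,…,N} and p_1, …, p_m ≥ 0 with Σ_{j=1}^m p_j = 1. For x ∈ ℝ^N and each j, let x⁺(j) = x + d(j), where d(j)_i = (1/L_i) · (Σ_{l∈𝒩_j} (1/L_l)(f_l'(x_l) − f_i'(x_i))) / (Σ_{l∈𝒩_j} 1/L_l) for i ∈ 𝒩_j and d(j)_i = 0 otherwise. Then Σ_{j=1}^m p_j f(x⁺(j)) ≤ f(x) − (1/2) ∇f(x)ᵀ G ∇f(x), where G = Σ_{j=1}^m p_j G_{𝒩_j} and ∇f(x) = (f_1'(x_1), …, f_N'(x_N)). -/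
open intervalIntegral in
lemma descent_lemma (f : ℝ → ℝ) (L : ℝ) (hL : 0 < L)
    (hdiff : Differentiable ℝ f)
    (hlip : ∀ a b : ℝ, |deriv f a - deriv f b| ≤ L * |a - b|)
    (a h : ℝ) : f (a + h) ≤ f a + deriv f a * h + L / 2 * h ^ 2 := by
  have hcont : Continuous (deriv f) := by
    have : LipschitzWith (Real.toNNReal L) (deriv f) := by
      apply LipschitzWith.of_dist_le_mul
      intro p q
      rw [Real.dist_eq, Real.dist_eq, Real.coe_toNNReal _ hL.le]
      exact hlip p q
    exact this.continuous
  have hder : ∀ s : ℝ, HasDerivAt (fun t => f (a + t * h)) (deriv f (a + s * h) * h) s := by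
    intro s
    have h1 : HasDerivAt (fun t : ℝ => a + t * h) h s := by
      simpa using ((hasDerivAt_id s).mul_const h).const_add a
    exact (hdiff (a + s * h)).hasDerivAt.comp s h1
  have hcont2 : Continuous (fun s : ℝ => deriv f (a + s * h) * h) := by
    exact (hcont.comp (by continuity)).mul continuous_const
  have key : f (a + h) - f a = ∫ s in (0:ℝ)..1, deriv f (a + s * h) * h := by
    rw [intervalIntegral.integral_eq_sub_of_hasDerivAt (fun s _ => hder s)
      (hcont2.intervalIntegrable 0 1)]
    norm_num
  have hcont3 : Continuous (fun s : ℝ => deriv f a * h + L * h ^ 2 * s) := by continuity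
  have e1 : ∫ s in (0:ℝ)..1, (deriv f a * h + L * h ^ 2 * s) = deriv f a * h + L / 2 * h ^ 2 := by
    rw [intervalIntegral.integral_add intervalIntegrable_const
      ((by continuity : Continuous (fun s : ℝ => L * h ^ 2 * s)).intervalIntegrable 0 1),
      intervalIntegral.integral_const, intervalIntegral.integral_const_mul, integral_id]
    norm_num
    ring
  have bound : ∫ s in (0:ℝ)..1, deriv f (a + s * h) * h
      ≤ ∫ s in (0:ℝ)..1, (deriv f a * h + L * h ^ 2 * s) := by
    apply intervalIntegral.integral_mono_on zero_le_one (hcont2.intervalIntegrable 0 1)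
      (hcont3.intervalIntegrable 0 1)
    intro s hs
    have hs0 : 0 ≤ s := hs.1
    have h1 := hlip (a + s * h) a
    have h2 : |a + s * h - a| = s * |h| := by
      rw [add_sub_cancel_left, abs_mul, abs_of_nonneg hs0]
    rw [h2] at h1
    have h3 : deriv f (a + s * h) * h - deriv f a * h
        ≤ |deriv f (a + s * h) - deriv f a| * |h| := by
      calc deriv f (a + s * h) * h - deriv f a * h
          = (deriv f (a + s * h) - deriv f a) * h := by ring
        _ ≤ |(deriv f (a + s * h) - deriv f a) * h| := le_abs_self _
        _ = |deriv f (a + s * h) - deriv f a| * |h| := abs_mul _ _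
    have h4 : |deriv f (a + s * h) - deriv f a| * |h| ≤ L * (s * |h|) * |h| := by
      apply mul_le_mul_of_nonneg_right h1 (abs_nonneg h)
    have h5 : |h| * |h| = h ^ 2 := by rw [abs_mul_abs_self]; ring
    have h6 : L * (s * |h|) * |h| = L * h ^ 2 * s := by rw [← h5]; ring
    linarith
  linarith [key, bound, e1]

lemma quad_form (N : ℕ) (L : Fin N → ℝ) (𝒩 : Finset (Fin N)) (g : Fin N → ℝ) :
    ∑ i, ∑ i', g i * GNmat N L 𝒩 i i' * g i'
      = (∑ i ∈ 𝒩, g i ^ 2 / L i)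
        - (∑ i ∈ 𝒩, g i / L i) ^ 2 / (∑ i ∈ 𝒩, 1 / L i) := by
  set S := ∑ k ∈ 𝒩, 1 / L k with hS
  have step1 : ∑ i, ∑ i', g i * GNmat N L 𝒩 i i' * g i'
      = ∑ i ∈ 𝒩, ∑ i' ∈ 𝒩,
          g i * ((if i = i' then 1 / L i else 0) - 1 / (L i * L i') / S) * g i' := by
    rw [← Finset.sum_subset (Finset.subset_univ 𝒩)
      (fun i _ hi => Finset.sum_eq_zero fun i' _ => by
        simp [GNmat, hi])]
    refine Finset.sum_congr rfl fun i hi => ?_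
    rw [← Finset.sum_subset (Finset.subset_univ 𝒩)
      (fun i' _ hi' => by simp [GNmat, hi'])]
    refine Finset.sum_congr rfl fun i' hi' => ?_
    simp only [GNmat, Matrix.of_apply]
    rw [if_pos ⟨hi, hi'⟩]
  rw [step1]
  have step2 : ∑ i ∈ 𝒩, ∑ i' ∈ 𝒩,
      g i * ((if i = i' then 1 / L i else 0) - 1 / (L i * L i') / S) * g i'
    = (∑ i ∈ 𝒩, ∑ i' ∈ 𝒩, (if i = i' then g i * (1 / L i) * g i' else 0))
      - ∑ i ∈ 𝒩, ∑ i' ∈ 𝒩, (g i / L i) * (g i' / L i') / S := by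
    rw [← Finset.sum_sub_distrib]
    refine Finset.sum_congr rfl fun i _ => ?_
    rw [← Finset.sum_sub_distrib]
    refine Finset.sum_congr rfl fun i' _ => ?_
    by_cases hii : i = i' <;> simp [hii] <;> ring
  rw [step2]
  have step3 : (∑ i ∈ 𝒩, ∑ i' ∈ 𝒩, (if i = i' then g i * (1 / L i) * g i' else 0))
      = ∑ i ∈ 𝒩, g i ^ 2 / L i := by
    refine Finset.sum_congr rfl fun i hi => ?_
    rw [Finset.sum_ite_eq 𝒩 i (fun i' => g i * (1 / L i) * g i'), if_pos hi]
    ring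
  have step4 : ∑ i ∈ 𝒩, ∑ i' ∈ 𝒩, (g i / L i) * (g i' / L i') / S
      = (∑ i ∈ 𝒩, g i / L i) ^ 2 / S := by
    have : ∀ i ∈ 𝒩, ∑ i' ∈ 𝒩, (g i / L i) * (g i' / L i') / S
        = (g i / L i) * (∑ i' ∈ 𝒩, g i' / L i') / S := by
      intro i _
      rw [Finset.mul_sum, Finset.sum_div]
    rw [Finset.sum_congr rfl this, ← Finset.sum_div, ← Finset.sum_mul, sq]
  rw [step3, step4]

/-- Expected decrease of the randomized coordinate descent step:
`∑ j, p j • f (x⁺(j)) ≤ f(x) − (1/2) ∇f(x)ᵀ G ∇f(x)` where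
`G = ∑ j, p j • G_{𝒩 j}`. -/
theorem stmt_5 (N : ℕ) (hN : 1 ≤ N) (L : Fin N → ℝ) (hL : ∀ i, 0 < L i)
    (f : Fin N → ℝ → ℝ) (hdiff : ∀ i, Differentiable ℝ (f i))
    (hlip : ∀ i, ∀ a b : ℝ, |deriv (f i) a - deriv (f i) b| ≤ L i * |a - b|)
    (m : ℕ) (𝒩s : Fin m → Finset (Fin N)) (h𝒩s : ∀ j, (𝒩s j).Nonempty)
    (p : Fin m → ℝ) (hp : ∀ j, 0 ≤ p j) (hp1 : ∑ j, p j = 1)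
    (x : Fin N → ℝ) (d : Fin m → Fin N → ℝ)
    (hd : ∀ j, ∀ i ∈ 𝒩s j, d j i = (1 / L i) *
      ((∑ l ∈ 𝒩s j, (1 / L l) * (deriv (f l) (x l) - deriv (f i) (x i))) /
        (∑ l ∈ 𝒩s j, 1 / L l)))
    (hd0 : ∀ j, ∀ i ∉ 𝒩s j, d j i = 0) :
    ∑ j, p j * (∑ i, f i (x i + d j i)) ≤ (∑ i, f i (x i))
      - (1 / 2) * ∑ i, ∑ i', deriv (f i) (x i) *
          (∑ j, p j • GNmat N L (𝒩s j)) i i' * deriv (f i') (x i') := by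
  set g : Fin N → ℝ := fun i => deriv (f i) (x i) with hg
  -- positivity of S j
  have hS : ∀ j, 0 < ∑ l ∈ 𝒩s j, 1 / L l := fun j =>
    Finset.sum_pos (fun l _ => one_div_pos.mpr (hL l)) (h𝒩s j)
  -- per-j key inequality
  have key : ∀ j, ∑ i, f i (x i + d j i) ≤ (∑ i, f i (x i))
      - (1 / 2) * ∑ i, ∑ i', g i * GNmat N L (𝒩s j) i i' * g i' := by
    intro j
    set 𝒩 := 𝒩s j with h𝒩
    set S := ∑ l ∈ 𝒩, 1 / L l with hSdef
    set T := ∑ l ∈ 𝒩, g l / L l with hT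
    have hSpos : 0 < S := hS j
    have hd' : ∀ i ∈ 𝒩, d j i = (T - S * g i) / (L i * S) := by
      intro i hi
      rw [hd j i hi]
      have e1 : ∑ l ∈ 𝒩, (1 / L l) * (g l - g i)
          = T - S * g i := by
        rw [hT, hSdef, Finset.sum_mul, ← Finset.sum_sub_distrib]
        exact Finset.sum_congr rfl fun l _ => by ring
      rw [e1]
      field_simp
      change S * (T - S * g i) / (L i * S) = (T - S * g i) / L i
      rw [mul_comm (L i) S, mul_div_mul_left _ _ hSpos.ne']
    have h2 : ∑ i, f i (x i + d j i)
        ≤ ∑ i, (f i (x i) + g i * d j i + L i / 2 * (d j i) ^ 2) :=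
      Finset.sum_le_sum fun i _ =>
        descent_lemma (f i) (L i) (hL i) (hdiff i) (hlip i) (x i) (d j i)
    have h3 : ∑ i, (g i * d j i + L i / 2 * (d j i) ^ 2)
        = -(1 / 2) * ((∑ i ∈ 𝒩, g i ^ 2 / L i) - T ^ 2 / S) := by
      rw [← Finset.sum_subset (Finset.subset_univ 𝒩)
        (fun i _ hi => by simp [hd0 j i hi])]
      have e2 : ∑ i ∈ 𝒩, (g i * d j i + L i / 2 * (d j i) ^ 2)
          = ∑ i ∈ 𝒩, (T ^ 2 / (2 * S ^ 2) * (1 / L i) - (1 / 2) * (g i ^ 2 / L i)) := by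
        refine Finset.sum_congr rfl fun i hi => ?_
        rw [hd' i hi]
        have hLi : L i ≠ 0 := (hL i).ne'
        have hS0 : S ≠ 0 := hSpos.ne'
        field_simp
        ring
      rw [e2, Finset.sum_sub_distrib, ← Finset.mul_sum, ← Finset.mul_sum, ← hSdef]
      have hS0 : S ≠ 0 := hSpos.ne'
      field_simp
      ring
    have h4 := quad_form N L 𝒩 g
    have h5 : ∑ i, (f i (x i) + g i * d j i + L i / 2 * (d j i) ^ 2)
        = (∑ i, f i (x i)) + ∑ i, (g i * d j i + L i / 2 * (d j i) ^ 2) := by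
      rw [← Finset.sum_add_distrib]
      exact Finset.sum_congr rfl fun i _ => by ring
    rw [h4, ← hT]
    rw [h5, h3] at h2
    linarith
  -- assemble
  have swap : ∑ i, ∑ i', g i * (∑ j, p j • GNmat N L (𝒩s j)) i i' * g i'
      = ∑ j, p j * ∑ i, ∑ i', g i * GNmat N L (𝒩s j) i i' * g i' := by
    have e : ∀ i i', g i * (∑ j, p j • GNmat N L (𝒩s j)) i i' * g i'
        = ∑ j, p j * (g i * GNmat N L (𝒩s j) i i' * g i') := by
      intro i i'
      simp only [Matrix.sum_apply, Matrix.smul_apply, smul_eq_mul,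
        Finset.mul_sum, Finset.sum_mul]
      exact Finset.sum_congr rfl fun j _ => by ring
    calc ∑ i, ∑ i', g i * (∑ j, p j • GNmat N L (𝒩s j)) i i' * g i'
        = ∑ i, ∑ i', ∑ j, p j * (g i * GNmat N L (𝒩s j) i i' * g i') := by
          exact Finset.sum_congr rfl fun i _ => Finset.sum_congr rfl fun i' _ => e i i'
      _ = ∑ i, ∑ j, ∑ i', p j * (g i * GNmat N L (𝒩s j) i i' * g i') :=
          Finset.sum_congr rfl fun i _ => Finset.sum_comm
      _ = ∑ j, ∑ i, ∑ i', p j * (g i * GNmat N L (𝒩s j) i i' * g i') :=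
          Finset.sum_comm
      _ = ∑ j, p j * ∑ i, ∑ i', g i * GNmat N L (𝒩s j) i i' * g i' := by
          refine Finset.sum_congr rfl fun j _ => ?_
          rw [Finset.mul_sum]
          exact Finset.sum_congr rfl fun i _ => (Finset.mul_sum _ _ _).symm
  calc ∑ j, p j * (∑ i, f i (x i + d j i))
      ≤ ∑ j, p j * ((∑ i, f i (x i))
          - (1 / 2) * ∑ i, ∑ i', g i * GNmat N L (𝒩s j) i i' * g i') :=
        Finset.sum_le_sum fun j _ => mul_le_mul_of_nonneg_left (key j) (hp j)
    _ = (∑ i, f i (x i)) - (1 / 2) * ∑ j, p j *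
          ∑ i, ∑ i', g i * GNmat N L (𝒩s j) i i' * g i' := by
        have e2 : ∀ j : Fin m, p j * ((∑ i, f i (x i))
            - (1 / 2) * ∑ i, ∑ i', g i * GNmat N L (𝒩s j) i i' * g i')
            = p j * (∑ i, f i (x i))
              - (1 / 2) * (p j * ∑ i, ∑ i', g i * GNmat N L (𝒩s j) i i' * g i') :=
          fun j => by ring
        rw [Finset.sum_congr rfl fun j _ => e2 j, Finset.sum_sub_distrib,
          ← Finset.sum_mul, hp1, one_mul, ← Finset.mul_sum]
    _ = (∑ i, f i (x i)) - (1 / 2) * ∑ i, ∑ i', g i *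
          (∑ j, p j • GNmat N L (𝒩s j)) i i' * g i' := by rw [swap]
end

section
/- Let N ≥ 2, L_1, …, L_N > 0, let 𝒩_1, …, 𝒩_m be subsets of {1,…,N} each with at least two elements, let p_1, …, p_m > 0, and set G = Σ_{j=1}^m p_j G_{𝒩_j}. Suppose the graph on vertex set {1,…,N} in which distinct vertices i and l are adjacent whenever {i,l} ⊆ 𝒩_j for some j is connected. Then for every x ∈ ℝ^N, xᵀ G x = 0 if and only if x_1 = x_2 = ⋯ = x_N; in particular the kernel of G equals the span of the all-ones vector e. -/
lemma Q_eq (N : ℕ) (L : Fin N → ℝ) (hL : ∀ i, 0 < L i) (𝒩 : Finset (Fin N))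
    (h𝒩 : 𝒩.Nonempty) (x : Fin N → ℝ) :
    (∑ i, ∑ j, x i * GNmat N L 𝒩 i j * x j) =
      (∑ i ∈ 𝒩, ∑ j ∈ 𝒩, (1/L i) * (1/L j) * (x i - x j)^2) / (2 * ∑ k ∈ 𝒩, 1/L k) := by
  set S : ℝ := ∑ k ∈ 𝒩, 1/L k with hS
  have hSpos : 0 < S := Finset.sum_pos (fun k _ => by
    have := hL k; positivity) h𝒩
  set A : ℝ := ∑ i ∈ 𝒩, (1/L i) * (x i)^2 with hA
  set B : ℝ := ∑ i ∈ 𝒩, (1/L i) * x i with hB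
  have hmul : ∀ a b : ℝ, 1/(a*b) = (1/a)*(1/b) := fun a b => by
    rw [one_div, one_div, one_div, mul_inv]
  have hrestrict : (∑ i, ∑ j, x i * GNmat N L 𝒩 i j * x j) =
      ∑ i ∈ 𝒩, ∑ j ∈ 𝒩, x i * GNmat N L 𝒩 i j * x j := by
    rw [← Finset.sum_subset 𝒩.subset_univ (fun i _ hi => ?_)]
    · apply Finset.sum_congr rfl; intro i hi
      rw [← Finset.sum_subset 𝒩.subset_univ (fun j _ hj => ?_)]
      simp [GNmat, hj]
    · apply Finset.sum_eq_zero; intro j _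
      simp [GNmat, hi]
  have hentry : ∀ i ∈ 𝒩, ∀ j ∈ 𝒩, x i * GNmat N L 𝒩 i j * x j =
      (if i = j then (1/L i) * (x i)^2 else 0) - ((1/L i * x i) * (1/L j * x j))/S := by
    intro i hi j hj
    simp only [GNmat, Matrix.of_apply]
    rw [if_pos (⟨hi, hj⟩ : i ∈ 𝒩 ∧ j ∈ 𝒩), ← hS, hmul]
    by_cases h : i = j
    · subst h; simp only [eq_self_iff_true, if_true]; ring
    · simp only [if_neg h]; ring
  have h1 : (∑ i ∈ 𝒩, ∑ j ∈ 𝒩, x i * GNmat N L 𝒩 i j * x j) = A - B^2/S := by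
    rw [Finset.sum_congr rfl (fun i hi => Finset.sum_congr rfl (fun j hj => hentry i hi j hj))]
    simp only [Finset.sum_sub_distrib]
    congr 1
    · apply Finset.sum_congr rfl; intro i hi
      simp [Finset.sum_ite_eq, hi]
    · simp only [← Finset.sum_div]
      congr 1
      rw [sq, hB, Finset.sum_mul_sum]
  have h2 : (∑ i ∈ 𝒩, ∑ j ∈ 𝒩, (1/L i) * (1/L j) * (x i - x j)^2)
      = 2*S*A - 2*B^2 := by
    have expand : ∀ i j : Fin N, (1/L i) * (1/L j) * (x i - x j)^2 =
        ((1/L i) * (x i)^2) * (1/L j) + (1/L i) * ((1/L j) * (x j)^2)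
          - 2 * ((1/L i * x i) * (1/L j * x j)) := fun i j => by ring
    simp only [expand, Finset.sum_sub_distrib, Finset.sum_add_distrib,
      ← Finset.sum_mul, ← Finset.mul_sum]
    rw [← hS, ← hA, ← hB, sq]
    ring
  rw [hrestrict, h1, h2]
  field_simp

lemma Q_nonneg (N : ℕ) (L : Fin N → ℝ) (hL : ∀ i, 0 < L i) (𝒩 : Finset (Fin N))
    (h𝒩 : 𝒩.Nonempty) (x : Fin N → ℝ) :
    0 ≤ ∑ i, ∑ j, x i * GNmat N L 𝒩 i j * x j := by
  rw [Q_eq N L hL 𝒩 h𝒩 x]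
  have hSpos : 0 < ∑ k ∈ 𝒩, 1/L k := Finset.sum_pos (fun k _ => by
    have := hL k; positivity) h𝒩
  apply div_nonneg _ (by linarith)
  apply Finset.sum_nonneg; intro i _
  apply Finset.sum_nonneg; intro j _
  have := hL i; have := hL j
  positivity

lemma Q_zero_iff (N : ℕ) (L : Fin N → ℝ) (hL : ∀ i, 0 < L i) (𝒩 : Finset (Fin N))
    (h𝒩 : 𝒩.Nonempty) (x : Fin N → ℝ)
    (h : (∑ i, ∑ j, x i * GNmat N L 𝒩 i j * x j) = 0) :
    ∀ i ∈ 𝒩, ∀ j ∈ 𝒩, x i = x j := by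
  rw [Q_eq N L hL 𝒩 h𝒩 x] at h
  have hSpos : 0 < ∑ k ∈ 𝒩, 1/L k := Finset.sum_pos (fun k _ => by
    have := hL k; positivity) h𝒩
  have hnum : (∑ i ∈ 𝒩, ∑ j ∈ 𝒩, (1/L i) * (1/L j) * (x i - x j)^2) = 0 := by
    rcases div_eq_zero_iff.mp h with h' | h'
    · exact h'
    · linarith
  have hterm : ∀ i ∈ 𝒩, (∑ j ∈ 𝒩, (1/L i) * (1/L j) * (x i - x j)^2) = 0 := by
    rw [Finset.sum_eq_zero_iff_of_nonneg (fun i _ => Finset.sum_nonneg (fun j _ => by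
      have := hL i; have := hL j; positivity))] at hnum
    exact hnum
  intro i hi j hj
  have := hterm i hi
  rw [Finset.sum_eq_zero_iff_of_nonneg (fun j _ => by
    have := hL i; have := hL j; positivity)] at this
  have h2 := this j hj
  have hLi := (hL i).ne'
  have hLj := (hL j).ne'
  have : (x i - x j)^2 = 0 := by
    by_contra hne
    apply hne
    have h1 : (1/L i) * (1/L j) ≠ 0 := by positivity
    exact (mul_eq_zero.mp h2).resolve_left h1
  have := pow_eq_zero_iff (n := 2) (by norm_num) |>.mp this
  linarith [sub_eq_zero.mp this]

lemma GN_mulVec_const (N : ℕ) (L : Fin N → ℝ) (hL : ∀ i, 0 < L i) (𝒩 : Finset (Fin N))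
    (h𝒩 : 𝒩.Nonempty) (c : ℝ) :
    (GNmat N L 𝒩).mulVec (fun _ => c) = 0 := by
  set S : ℝ := ∑ k ∈ 𝒩, 1/L k with hS
  have hSpos : 0 < S := Finset.sum_pos (fun k _ => by
    have := hL k; positivity) h𝒩
  have hmul : ∀ a b : ℝ, 1/(a*b) = (1/a)*(1/b) := fun a b => by
    rw [one_div, one_div, one_div, mul_inv]
  funext i
  simp only [Matrix.mulVec, dotProduct, Pi.zero_apply]
  by_cases hi : i ∈ 𝒩
  · rw [← Finset.sum_subset 𝒩.subset_univ (fun j _ hj => by simp [GNmat, hj])]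
    have hentry : ∀ j ∈ 𝒩, GNmat N L 𝒩 i j * c =
        (if i = j then (1/L i) * c else 0) - (1/L i) * c * (1/L j) / S := by
      intro j hj
      simp only [GNmat, Matrix.of_apply]
      rw [if_pos (⟨hi, hj⟩ : i ∈ 𝒩 ∧ j ∈ 𝒩), ← hS, hmul]
      by_cases h : i = j
      · subst h; simp only [eq_self_iff_true, if_true]; ring
      · simp only [if_neg h]; ring
    rw [Finset.sum_congr rfl hentry, Finset.sum_sub_distrib]
    simp only [Finset.sum_ite_eq, hi, if_true]
    rw [← Finset.sum_div, ← Finset.mul_sum, ← hS]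
    rw [mul_div_assoc, div_self hSpos.ne', mul_one, sub_self]
  · apply Finset.sum_eq_zero; intro j _
    simp [GNmat, hi]


/-- If the graph generated by the sets `𝒩 j` is connected, then
`xᵀ G x = 0` iff all components of `x` are equal, and the kernel of
`G = ∑ j, p j • G_{𝒩 j}` is the span of the all-ones vector. -/
theorem stmt_6 (N : ℕ) (hN : 2 ≤ N) (L : Fin N → ℝ) (hL : ∀ i, 0 < L i)
    (m : ℕ) (𝒩s : Fin m → Finset (Fin N)) (hcard : ∀ j, 2 ≤ (𝒩s j).card)
    (p : Fin m → ℝ) (hp : ∀ j, 0 < p j)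
    (G : Matrix (Fin N) (Fin N) ℝ) (hG : G = ∑ j, p j • GNmat N L (𝒩s j))
    (hconn : (SimpleGraph.fromRel
      (fun i l : Fin N => ∃ j, i ∈ 𝒩s j ∧ l ∈ 𝒩s j)).Connected) :
    (∀ x : Fin N → ℝ,
      (∑ i, ∑ j, x i * G i j * x j) = 0 ↔ ∀ i j : Fin N, x i = x j) ∧
    (∀ x : Fin N → ℝ,
      G.mulVec x = 0 ↔ ∃ c : ℝ, x = fun _ => c) := by
  have h𝒩 : ∀ j, (𝒩s j).Nonempty := fun j =>
    Finset.card_pos.mp (lt_of_lt_of_le two_pos (hcard j))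
  -- splitting the quadratic form
  have hform : ∀ x : Fin N → ℝ, (∑ i, ∑ l, x i * G i l * x l)
      = ∑ j, p j * (∑ i, ∑ l, x i * GNmat N L (𝒩s j) i l * x l) := by
    intro x
    subst hG
    have hterm : ∀ i l : Fin N,
        x i * (∑ j, p j • GNmat N L (𝒩s j)) i l * x l
          = ∑ j, p j * (x i * GNmat N L (𝒩s j) i l * x l) := by
      intro i l
      simp only [Matrix.sum_apply, Matrix.smul_apply, smul_eq_mul,
        Finset.sum_mul, Finset.mul_sum]
      apply Finset.sum_congr rfl; intro j _; ring
    calc (∑ i, ∑ l, x i * (∑ j, p j • GNmat N L (𝒩s j)) i l * x l)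
        = ∑ i, ∑ l, ∑ j, p j * (x i * GNmat N L (𝒩s j) i l * x l) := by
          exact Finset.sum_congr rfl fun i _ => Finset.sum_congr rfl fun l _ => hterm i l
      _ = ∑ i, ∑ j, ∑ l, p j * (x i * GNmat N L (𝒩s j) i l * x l) := by
          exact Finset.sum_congr rfl fun i _ => Finset.sum_comm
      _ = ∑ j, ∑ i, ∑ l, p j * (x i * GNmat N L (𝒩s j) i l * x l) := Finset.sum_comm
      _ = ∑ j, p j * (∑ i, ∑ l, x i * GNmat N L (𝒩s j) i l * x l) := by
          apply Finset.sum_congr rfl; intro j _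
          simp only [Finset.mul_sum]
  -- constant vectors are in the kernel
  have hker : ∀ c : ℝ, G.mulVec (fun _ => c) = 0 := by
    intro c
    subst hG
    funext i
    simp only [Matrix.mulVec, dotProduct, Matrix.sum_apply, Matrix.smul_apply,
      smul_eq_mul, Finset.sum_mul, Pi.zero_apply]
    rw [Finset.sum_comm]
    apply Finset.sum_eq_zero; intro j _
    have hz := congrFun (GN_mulVec_const N L hL (𝒩s j) (h𝒩 j) c) i
    simp only [Matrix.mulVec, dotProduct, Pi.zero_apply] at hz
    calc (∑ l, p j * GNmat N L (𝒩s j) i l * c)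
        = p j * ∑ l, GNmat N L (𝒩s j) i l * c := by
          rw [Finset.mul_sum]; apply Finset.sum_congr rfl; intro l _; ring
      _ = 0 := by rw [hz, mul_zero]
  -- quadratic form as dot with mulVec
  have hdot : ∀ x : Fin N → ℝ, (∑ i, ∑ l, x i * G i l * x l)
      = ∑ i, x i * G.mulVec x i := by
    intro x
    apply Finset.sum_congr rfl; intro i _
    simp only [Matrix.mulVec, dotProduct, Finset.mul_sum]
    apply Finset.sum_congr rfl; intro l _; ring
  -- forward direction of part 1
  have hfwd : ∀ x : Fin N → ℝ, (∑ i, ∑ l, x i * G i l * x l) = 0 →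
      ∀ i l : Fin N, x i = x l := by
    intro x hx
    rw [hform x] at hx
    have hQ0 : ∀ j, (∑ i, ∑ l, x i * GNmat N L (𝒩s j) i l * x l) = 0 := by
      have := (Finset.sum_eq_zero_iff_of_nonneg (fun j _ =>
        mul_nonneg (hp j).le (Q_nonneg N L hL (𝒩s j) (h𝒩 j) x))).mp hx
      intro j
      have hj := this j (Finset.mem_univ j)
      exact (mul_eq_zero.mp hj).resolve_left (hp j).ne'
    have hloc : ∀ j, ∀ i ∈ 𝒩s j, ∀ l ∈ 𝒩s j, x i = x l := fun j =>
      Q_zero_iff N L hL (𝒩s j) (h𝒩 j) x (hQ0 j)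
    have hstep : ∀ {a b : Fin N},
        (SimpleGraph.fromRel (fun i l : Fin N => ∃ j, i ∈ 𝒩s j ∧ l ∈ 𝒩s j)).Adj a b →
        x a = x b := by
      intro a b hab
      rw [SimpleGraph.fromRel_adj] at hab
      rcases hab.2 with ⟨j, ha, hb⟩ | ⟨j, hb, ha⟩
      · exact hloc j a ha b hb
      · exact hloc j a ha b hb
    intro i l
    obtain ⟨w⟩ := hconn i l
    induction w with
    | nil => rfl
    | cons h w ih => exact (hstep h).trans ih
  constructor
  · intro x
    constructor
    · exact hfwd x
    · intro hx
      have hc : x = fun _ => x ⟨0, lt_of_lt_of_le two_pos hN⟩ := by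
        funext i; exact hx i _
      rw [hdot x, hc, hker (x ⟨0, lt_of_lt_of_le two_pos hN⟩)]
      simp
  · intro x
    constructor
    · intro hx
      have h0 : (∑ i, ∑ l, x i * G i l * x l) = 0 := by
        rw [hdot x, hx]; simp
      exact ⟨x ⟨0, lt_of_lt_of_le two_pos hN⟩, funext fun i => hfwd x h0 i _⟩
    · rintro ⟨c, rfl⟩
      exact hker c
end

section
/- Let N ≥ 2 and let G be an N×N symmetric positive semidefinite real matrix with G e = 0 whose kernel equals the span of the all-ones vector e. Then for every ζ > 0 the matrix G + ζ e eᵀ is positive definite (hence invertible), and for every x ∈ S, sup{⟨x,u⟩ : u ∈ ℝ^N, uᵀGu ≤ 1} = √(xᵀ (G + ζ e eᵀ)^{-1} x); in particular the right-hand side is independent of ζ > 0. -/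
open Matrix

lemma aux_dot_symm {N : ℕ} (G : Matrix (Fin N) (Fin N) ℝ) (hsym : G.IsSymm)
    (u v : Fin N → ℝ) : u ⬝ᵥ G *ᵥ v = v ⬝ᵥ G *ᵥ u := by
  rw [dotProduct_mulVec, ← Matrix.mulVec_transpose, hsym, dotProduct_comm]

lemma aux_cs {N : ℕ} (G : Matrix (Fin N) (Fin N) ℝ) (hsym : G.IsSymm)
    (hpsd : G.PosSemidef) (u v : Fin N → ℝ) :
    (u ⬝ᵥ G *ᵥ v) ^ 2 ≤ (u ⬝ᵥ G *ᵥ u) * (v ⬝ᵥ G *ᵥ v) := by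
  have key : ∀ t : ℝ, 0 ≤ (v ⬝ᵥ G *ᵥ v) * (t * t) + (2 * (u ⬝ᵥ G *ᵥ v)) * t
      + u ⬝ᵥ G *ᵥ u := by
    intro t
    have h0 := hpsd.dotProduct_mulVec_nonneg (u + t • v)
    simp only [star_trivial] at h0
    have hexp : (u + t • v) ⬝ᵥ G *ᵥ (u + t • v)
        = (v ⬝ᵥ G *ᵥ v) * (t * t) + (2 * (u ⬝ᵥ G *ᵥ v)) * t + u ⬝ᵥ G *ᵥ u := by
      have h1 := aux_dot_symm G hsym v u
      simp only [Matrix.mulVec_add, Matrix.mulVec_smul, dotProduct_add, add_dotProduct,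
        dotProduct_smul, smul_dotProduct, smul_eq_mul]
      rw [h1]; ring
    linarith [hexp ▸ h0]
  have hd := discrim_le_zero key
  rw [discrim] at hd
  nlinarith [hd]

/-- If `G` is symmetric PSD with kernel spanned by the all-ones
vector `e`, then for every `ζ > 0` the matrix `G + ζ e eᵀ` is positive definite
(hence invertible) and, for `x ∈ S`, the dual norm
`sup{⟨x,u⟩ : uᵀGu ≤ 1}` equals `√(xᵀ (G + ζ e eᵀ)⁻¹ x)`. -/
theorem stmt_7 (N : ℕ) (hN : 2 ≤ N) (G : Matrix (Fin N) (Fin N) ℝ)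
    (hsym : G.IsSymm) (hpsd : G.PosSemidef)
    (hGe : G.mulVec (fun _ => (1 : ℝ)) = 0)
    (hker : ∀ u : Fin N → ℝ, G.mulVec u = 0 → ∃ c : ℝ, u = fun _ => c)
    (ζ : ℝ) (hζ : 0 < ζ) :
    (G + ζ • Matrix.of (fun _ _ : Fin N => (1 : ℝ))).PosDef ∧
    IsUnit (G + ζ • Matrix.of (fun _ _ : Fin N => (1 : ℝ))) ∧
    ∀ x : Fin N → ℝ, (∑ i, x i = 0) →
      sSup {r : ℝ | ∃ u : Fin N → ℝ,
          (∑ i, ∑ j, u i * G i j * u j) ≤ 1 ∧ r = ∑ i, x i * u i}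
        = Real.sqrt (∑ i, ∑ j,
            x i * (G + ζ • Matrix.of (fun _ _ : Fin N => (1 : ℝ)))⁻¹ i j * x j) := by
  set J : Matrix (Fin N) (Fin N) ℝ := Matrix.of (fun _ _ : Fin N => (1 : ℝ)) with hJdef
  set H : Matrix (Fin N) (Fin N) ℝ := G + ζ • J with hHdef
  have hNne : (N : ℝ) ≠ 0 := Nat.cast_ne_zero.mpr (by omega)
  have hJmul : ∀ u : Fin N → ℝ, J *ᵥ u = fun _ => ∑ j, u j := by
    intro u; funext i; simp [hJdef, Matrix.mulVec, dotProduct]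
  have hquadH : ∀ u : Fin N → ℝ, u ⬝ᵥ H *ᵥ u = u ⬝ᵥ G *ᵥ u + ζ * (∑ j, u j) ^ 2 := by
    intro u
    rw [hHdef, Matrix.add_mulVec, dotProduct_add, Matrix.smul_mulVec,
      dotProduct_smul, hJmul, smul_eq_mul]
    congr 1
    have : u ⬝ᵥ (fun _ => ∑ j, u j) = (∑ i, u i) * (∑ j, u j) := by
      simp [dotProduct, Finset.sum_mul]
    rw [this, sq]
  have hpos : ∀ u : Fin N → ℝ, 0 ≤ u ⬝ᵥ G *ᵥ u := by
    intro u; simpa using hpsd.dotProduct_mulVec_nonneg u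
  have hpd : H.PosDef := by
    refine Matrix.PosDef.of_dotProduct_mulVec_pos ?_ ?_
    · have hJsymm : Jᵀ = J := by ext i j; simp [hJdef]
      have hHt : Hᵀ = H := by
        rw [hHdef, Matrix.transpose_add, Matrix.transpose_smul, hsym, hJsymm]
      show Hᴴ = H
      ext i j
      simp only [Matrix.conjTranspose_apply, star_trivial]
      exact congrFun (congrFun hHt i) j
    · intro u hu
      simp only [star_trivial]
      rw [hquadH]
      rcases eq_or_ne (∑ j, u j) 0 with hs | hs
      · have hne : u ⬝ᵥ G *ᵥ u ≠ 0 := by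
          intro h
          have hGu := (hpsd.dotProduct_mulVec_zero_iff u).mp (by simpa using h)
          obtain ⟨c, rfl⟩ := hker u hGu
          have hNc : (N : ℝ) * c = 0 := by
            simpa [Finset.sum_const, nsmul_eq_mul] using hs
          have hc : c = 0 := by
            rcases mul_eq_zero.mp hNc with h | h
            · exact absurd h hNne
            · exact h
          exact hu (by funext i; simp [hc])
        have h1 : 0 < u ⬝ᵥ G *ᵥ u := lt_of_le_of_ne (hpos u) (Ne.symm hne)
        rw [hs]
        simpa using h1
      · have h1 : 0 < ζ * (∑ j, u j) ^ 2 := by positivity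
        linarith [hpos u]
  refine ⟨hpd, hpd.isUnit, ?_⟩
  intro x hx
  set v : Fin N → ℝ := H⁻¹ *ᵥ x with hvdef
  have hdetH : IsUnit H.det := isUnit_iff_ne_zero.mpr hpd.det_pos.ne'
  have hHv : H *ᵥ v = x := by
    rw [hvdef, Matrix.mulVec_mulVec, Matrix.mul_nonsing_inv H hdetH, Matrix.one_mulVec]
  -- sum of v is zero
  have hsv : ∑ i, v i = 0 := by
    have h1 : (fun _ => (1 : ℝ)) ⬝ᵥ (H *ᵥ v) = (fun _ => (1 : ℝ)) ⬝ᵥ x := by rw [hHv]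
    have h2 : (fun _ => (1 : ℝ)) ⬝ᵥ x = 0 := by simpa [dotProduct] using hx
    have h3 : (fun _ => (1 : ℝ)) ⬝ᵥ (G *ᵥ v) = 0 := by
      rw [aux_dot_symm G hsym, hGe]
      simp
    have h4 : (fun _ => (1 : ℝ)) ⬝ᵥ (H *ᵥ v)
        = (N : ℝ) * (ζ * ∑ j, v j) := by
      rw [hHdef, Matrix.add_mulVec, dotProduct_add, Matrix.smul_mulVec,
        dotProduct_smul, hJmul, h3, smul_eq_mul]
      have he : (fun _ : Fin N => (1 : ℝ)) ⬝ᵥ (fun _ : Fin N => ∑ j, v j) = (N : ℝ) * ∑ j, v j := by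
        simp [dotProduct, Finset.sum_const, nsmul_eq_mul]
      rw [he]
      ring
    have h5 : (N : ℝ) * (ζ * ∑ j, v j) = 0 := by rw [← h4, h1, h2]
    rcases mul_eq_zero.mp h5 with h | h
    · exact absurd h hNne
    rcases mul_eq_zero.mp h with h | h
    · exact absurd h hζ.ne'
    · exact h
  have hGv : G *ᵥ v = x := by
    have : H *ᵥ v = G *ᵥ v := by
      rw [hHdef, Matrix.add_mulVec, Matrix.smul_mulVec, hJmul, hsv]
      have hz : (ζ • fun _ : Fin N => (0 : ℝ)) = (0 : Fin N → ℝ) := by funext i; simp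
      rw [hz, add_zero]
    rw [← this, hHv]
  have hxv : x ⬝ᵥ v = v ⬝ᵥ G *ᵥ v := by rw [← hGv, dotProduct_comm]
  have hQv : 0 ≤ v ⬝ᵥ G *ᵥ v := hpos v
  -- rewrite the sums
  have hquad : ∀ u : Fin N → ℝ, (∑ i, ∑ j, u i * G i j * u j) = u ⬝ᵥ G *ᵥ u := by
    intro u; simp [dotProduct, Matrix.mulVec, Finset.mul_sum, mul_assoc]
  have hrhs : (∑ i, ∑ j, x i * H⁻¹ i j * x j) = x ⬝ᵥ v := by
    rw [hvdef]; simp [dotProduct, Matrix.mulVec, Finset.mul_sum, mul_assoc]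
  have hdots : ∀ u : Fin N → ℝ, (∑ i, x i * u i) = x ⬝ᵥ u := fun _ => rfl
  rw [hrhs, hxv]
  set Q : ℝ := v ⬝ᵥ G *ᵥ v with hQdef
  set A : Set ℝ := {r : ℝ | ∃ u : Fin N → ℝ,
      (∑ i, ∑ j, u i * G i j * u j) ≤ 1 ∧ r = ∑ i, x i * u i} with hAdef
  -- upper bound
  have hub : ∀ r ∈ A, r ≤ Real.sqrt Q := by
    rintro r ⟨u, hu1, rfl⟩
    rw [hquad u] at hu1
    rw [hdots u]
    have hxu : x ⬝ᵥ u = u ⬝ᵥ G *ᵥ v := by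
      rw [← hGv, dotProduct_comm]
    rw [hxu]
    have hcs := aux_cs G hsym hpsd u v
    have h2 : (u ⬝ᵥ G *ᵥ v) ^ 2 ≤ Q := by
      calc (u ⬝ᵥ G *ᵥ v) ^ 2 ≤ (u ⬝ᵥ G *ᵥ u) * Q := hcs
        _ ≤ 1 * Q := mul_le_mul_of_nonneg_right hu1 hQv
        _ = Q := one_mul Q
    calc u ⬝ᵥ G *ᵥ v ≤ |u ⬝ᵥ G *ᵥ v| := le_abs_self _
      _ = Real.sqrt ((u ⬝ᵥ G *ᵥ v) ^ 2) := (Real.sqrt_sq_eq_abs _).symm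
      _ ≤ Real.sqrt Q := Real.sqrt_le_sqrt h2
  -- membership
  have hmem : Real.sqrt Q ∈ A := by
    rcases eq_or_lt_of_le hQv with h0 | h0
    · refine ⟨0, ?_, ?_⟩
      · rw [hquad 0]; simp
      · rw [hdots 0, ← h0]; simp
    · refine ⟨(Real.sqrt Q)⁻¹ • v, ?_, ?_⟩
      · rw [hquad]
        have hs : Real.sqrt Q > 0 := Real.sqrt_pos.mpr h0
        have : ((Real.sqrt Q)⁻¹ • v) ⬝ᵥ G *ᵥ ((Real.sqrt Q)⁻¹ • v)
            = (Real.sqrt Q)⁻¹ * ((Real.sqrt Q)⁻¹ * Q) := by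
          rw [Matrix.mulVec_smul, dotProduct_smul, smul_dotProduct]
          simp [smul_eq_mul, hQdef]
        rw [this, ← mul_assoc, ← mul_inv, Real.mul_self_sqrt hQv,
          inv_mul_cancel₀ h0.ne']
      · rw [hdots, dotProduct_smul, smul_eq_mul, hxv]
        rw [inv_mul_eq_div, Real.div_sqrt]
  have hne : A.Nonempty := ⟨Real.sqrt Q, hmem⟩
  have hbdd : BddAbove A := ⟨Real.sqrt Q, hub⟩
  exact le_antisymm (csSup_le hne hub) (le_csSup hbdd hmem)
end

section
/- Let R > 0 and let (Δ_k)_{k≥0} be a sequence of nonnegative real numbers satisfying Δ_{l+1} ≤ Δ_l − Δ_l² / (2R²) for every l ≥ 0. Then Δ_k ≤ 2R²/k for every k ≥ 1. -/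
/-- A nonnegative sequence satisfying
`Δ_{l+1} ≤ Δ_l − Δ_l²/(2R²)` obeys `Δ_k ≤ 2R²/k` for all `k ≥ 1`. -/
theorem stmt_9 (R : ℝ) (hR : 0 < R) (Δ : ℕ → ℝ) (hnn : ∀ k, 0 ≤ Δ k)
    (hrec : ∀ l, Δ (l + 1) ≤ Δ l - (Δ l) ^ 2 / (2 * R ^ 2)) :
    ∀ k : ℕ, 1 ≤ k → Δ k ≤ 2 * R ^ 2 / k := by
  have hC : (0:ℝ) < 2 * R ^ 2 := by positivity
  intro k hk
  induction k, hk using Nat.le_induction with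
  | base =>
    have h := hrec 0
    have h0 := hnn 0
    push_cast
    rw [div_one]
    have hq : Δ 0 ^ 2 / (2 * R ^ 2) * (2 * R ^ 2) = Δ 0 ^ 2 :=
      div_mul_cancel₀ _ hC.ne'
    nlinarith [sq_nonneg (Δ 0 - R ^ 2), sq_nonneg (Δ 0), hq]
  | succ n hn ih =>
    have h := hrec n
    have h0 := hnn n
    have hnpos : (0:ℝ) < (n:ℝ) := by exact_mod_cast hn
    have hn1 : (0:ℝ) < (n:ℝ) + 1 := by linarith
    push_cast
    by_cases hcase : Δ n ≤ 2 * R ^ 2 / ((n:ℝ) + 1)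
    · have hd : 0 ≤ Δ n ^ 2 / (2 * R ^ 2) := by positivity
      linarith
    · push_neg at hcase
      have ih' : Δ n * (n:ℝ) ≤ 2 * R ^ 2 := by
        rw [le_div_iff₀ hnpos] at ih; linarith
      have hc' : 2 * R ^ 2 < Δ n * ((n:ℝ) + 1) := by
        rw [div_lt_iff₀ hn1] at hcase; linarith
      rw [le_div_iff₀ hn1]
      have hq : Δ n ^ 2 / (2 * R ^ 2) * (2 * R ^ 2) = Δ n ^ 2 :=
        div_mul_cancel₀ _ hC.ne'
      nlinarith [mul_le_mul_of_nonneg_right h (le_of_lt hn1)]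
end

section
/- Let N ≥ 2, let G be an N×N symmetric positive semidefinite real matrix with G e = 0 and such that uᵀGu = 0 implies u is a scalar multiple of e, and let f : ℝ^N → ℝ be convex and differentiable. Suppose f attains its minimum value f* over S. Let (Ω, 𝓕, μ) be a probability space with a filtration (𝓕_k)_{k≥0}, let x⁰ ∈ S, and let (X_k)_{k≥0} be an adapted sequence of ℝ^N-valued random variables with X_0 = x⁰ almost surely, each f(X_k) integrable, and, almost surely for every k: X_k ∈ S, f(X_{k+1}) ≤ f(X_k), and E[f(X_{k+1}) | 𝓕_k] ≤ f(X_k) − (1/2) ∇f(X_k)ᵀ G ∇f(X_k). Suppose R > 0 is such that for every x ∈ S with f(x) ≤ f(x⁰) there exists a minimizer x* of f over S with ‖x − x*‖*_G ≤ R. Then for every k ≥ 1, E[f(X_k)] − f* ≤ 2R²/k. -/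
open MeasureTheory

/-- The gradient of `f : (Fin N → ℝ) → ℝ` at `x`, as a vector. -/
noncomputable def gradVec (N : ℕ) (f : (Fin N → ℝ) → ℝ) (x : Fin N → ℝ) :
    Fin N → ℝ :=
  fun i => fderiv ℝ f x (Pi.single i 1)


section Aux

open Matrix

lemma grad_ineq {E : Type*} [NormedAddCommGroup E] [NormedSpace ℝ E]
    (f : E → ℝ) (hconv : ConvexOn ℝ Set.univ f) (hdiff : Differentiable ℝ f)
    (x y : E) : f x + fderiv ℝ f x (y - x) ≤ f y := by
  set φ : ℝ → ℝ := fun t => f (x + t • (y - x)) with hφ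
  have hφconv : ConvexOn ℝ Set.univ φ := by
    have := hconv.comp_affineMap (AffineMap.lineMap x y : ℝ →ᵃ[ℝ] E)
    have he : (f ∘ (AffineMap.lineMap x y : ℝ →ᵃ[ℝ] E)) = φ := by
      funext t; simp [φ, AffineMap.lineMap_apply, add_comm]
    simpa [he] using this
  have hd : HasDerivAt φ (fderiv ℝ f x (y - x)) 0 := by
    have h1 : HasDerivAt (fun t : ℝ => x + t • (y - x)) (y - x) 0 := by
      simpa using ((hasDerivAt_id (0:ℝ)).smul_const (y - x)).const_add x
    have h2 := (hdiff (x + (0:ℝ) • (y - x))).hasFDerivAt.comp_hasDerivAt 0 h1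
    rw [show (0:ℝ) • (y - x) = 0 by simp, add_zero] at h2
    exact h2
  have := hφconv.le_slope_of_hasDerivAt (Set.mem_univ 0) (Set.mem_univ 1) one_pos hd
  rw [slope_def_field] at this
  have h0 : φ 0 = f x := by simp [φ]
  have h1 : φ 1 = f y := by simp [φ]
  rw [h0, h1] at this
  simp only [sub_zero, div_one] at this
  linarith


lemma clm_sum {N : ℕ} (L : (Fin N → ℝ) →L[ℝ] ℝ) (v : Fin N → ℝ) :
    L v = ∑ i, v i * L (Pi.single i 1) := by
  conv_lhs => rw [pi_eq_sum_univ v]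
  rw [map_sum]
  refine Finset.sum_congr rfl fun i _ => ?_
  rw [_root_.map_smul, smul_eq_mul]
  congr 2
  funext j
  simp [Pi.single_apply, eq_comm]


lemma rate_key (R a K : ℝ) (hR : 0 < R) (ha : 0 ≤ a) (hK : 1 ≤ K)
    (haK : 2 ≤ K → a * K ≤ 2 * R ^ 2) :
    (2 * R ^ 2 * a - a ^ 2) * (K + 1) ≤ 4 * R ^ 4 := by
  rcases le_total K 2 with h2 | h2
  · nlinarith [mul_nonneg (by linarith : (0:ℝ) ≤ K + 1) (sq_nonneg (a - R^2)),
      mul_nonneg (pow_nonneg hR.le 4) (by linarith : (0:ℝ) ≤ 3 - K)]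
  · have hv := haK h2
    nlinarith [mul_nonneg (by linarith : (0:ℝ) ≤ K + 1) (sq_nonneg (a * K - 2 * R^2)),
      mul_nonneg (mul_nonneg (mul_nonneg (by positivity : (0:ℝ) ≤ 2 * R^2)
        (by linarith : (0:ℝ) ≤ K + 1)) (by linarith : (0:ℝ) ≤ K - 2))
        (by linarith : (0:ℝ) ≤ 2 * R^2 - a * K),
      mul_pos (by linarith : (0:ℝ) < K) (by linarith : (0:ℝ) < K),
      pow_pos hR 4]

lemma rate_step (R a b K : ℝ) (hR : 0 < R) (ha : 0 ≤ a) (hK : 1 ≤ K)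
    (haK : 2 ≤ K → a * K ≤ 2 * R ^ 2)
    (hb : b ≤ a - a ^ 2 / (2 * R ^ 2)) :
    b ≤ 2 * R ^ 2 / (K + 1) := by
  have h2R : (0:ℝ) < 2 * R ^ 2 := by positivity
  have hKp : (0:ℝ) < K + 1 := by linarith
  have he : a - a ^ 2 / (2 * R ^ 2) = (2 * R ^ 2 * a - a ^ 2) / (2 * R ^ 2) := by
    field_simp
  have hkey := rate_key R a K hR ha hK haK
  have : (2 * R ^ 2 * a - a ^ 2) / (2 * R ^ 2) ≤ 2 * R ^ 2 / (K + 1) := by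
    rw [div_le_div_iff₀ h2R hKp]
    nlinarith
  linarith [hb.trans (he ▸ this)]

lemma quad_lower {N : ℕ} (hN : 2 ≤ N) (G : Matrix (Fin N) (Fin N) ℝ)
    (hpsd : G.PosSemidef)
    (hker : ∀ u : Fin N → ℝ, (∑ i, ∑ j, u i * G i j * u j) = 0 →
      ∃ c : ℝ, u = fun _ => c) :
    ∃ m : ℝ, 0 < m ∧ ∀ v : Fin N → ℝ, (∑ i, v i = 0) →
      m * ∑ i, (v i)^2 ≤ v ⬝ᵥ G.mulVec v := by
  have hpsd2 : ∀ x : Fin N → ℝ, 0 ≤ x ⬝ᵥ G.mulVec x := fun x => by simpa using hpsd.dotProduct_mulVec_nonneg x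
  have htriple : ∀ u v : Fin N → ℝ, ∑ i, ∑ j, u i * G i j * v j = u ⬝ᵥ G.mulVec v := by
    intro u v
    simp [dotProduct, Matrix.mulVec, Finset.mul_sum, mul_assoc]
  set Q : (Fin N → ℝ) → ℝ := fun u => u ⬝ᵥ G.mulVec u with hQ
  have hQcont : Continuous Q := by
    have hQe : Q = fun u => ∑ i, ∑ j, u i * G i j * u j := by
      funext u; rw [htriple]
    rw [hQe]
    refine continuous_finset_sum _ fun i _ => continuous_finset_sum _ fun j _ => ?_
    exact ((continuous_apply i).mul continuous_const).mul (continuous_apply j)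
  set K : Set (Fin N → ℝ) := {v | (∑ i, v i) = 0 ∧ ∑ i, (v i)^2 = 1} with hK
  have hKc : IsCompact K := by
    apply Metric.isCompact_of_isClosed_isBounded
    · apply IsClosed.inter
      · exact isClosed_eq (continuous_finset_sum _ fun i _ => continuous_apply i) continuous_const
      · exact isClosed_eq (continuous_finset_sum _ fun i _ => (continuous_apply i).pow 2) continuous_const
    · rw [Metric.isBounded_iff_subset_closedBall 0]
      refine ⟨1, fun v hv => ?_⟩
      rw [Metric.mem_closedBall, dist_zero_right]
      rw [pi_norm_le_iff_of_nonneg zero_le_one]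
      intro i
      rw [Real.norm_eq_abs, abs_le]
      have h1 : (v i)^2 ≤ 1 := by
        rw [← hv.2]
        exact Finset.single_le_sum (fun j _ => sq_nonneg (v j)) (Finset.mem_univ i)
      constructor <;> nlinarith
  have hKne : K.Nonempty := by
    obtain ⟨a, b, h01⟩ : ∃ a b : Fin N, a ≠ b :=
      ⟨⟨0, by omega⟩, ⟨1, by omega⟩, by simp [Fin.ext_iff]⟩
    set c : ℝ := Real.sqrt 2 / 2 with hc
    have hsq : ∀ i : Fin N, ((Pi.single a 1 : Fin N → ℝ) i - (Pi.single b 1 : Fin N → ℝ) i)^2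
        = (Pi.single a 1 : Fin N → ℝ) i + (Pi.single b 1 : Fin N → ℝ) i := by
      intro i
      rcases eq_or_ne i a with rfl | hia
      · rw [Pi.single_eq_same, Pi.single_eq_of_ne h01]
        norm_num
      · rcases eq_or_ne i b with rfl | hib
        · rw [Pi.single_eq_same, Pi.single_eq_of_ne hia]
          norm_num
        · rw [Pi.single_eq_of_ne hia, Pi.single_eq_of_ne hib]
          norm_num
    refine ⟨fun i => c * ((Pi.single a 1 : Fin N → ℝ) i - (Pi.single b 1 : Fin N → ℝ) i), ?_, ?_⟩
    · rw [← Finset.mul_sum]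
      have : ∑ i, ((Pi.single a 1 : Fin N → ℝ) i - (Pi.single b 1 : Fin N → ℝ) i) = 0 := by
        rw [Finset.sum_sub_distrib]
        simp [Finset.sum_pi_single']
      rw [this, mul_zero]
    · have heq : ∑ i, (c * ((Pi.single a 1 : Fin N → ℝ) i - (Pi.single b 1 : Fin N → ℝ) i))^2 = c^2 * 2 := by
        simp only [mul_pow]
        rw [← Finset.mul_sum]
        congr 1
        rw [Finset.sum_congr rfl (fun i _ => hsq i), Finset.sum_add_distrib]
        simp [Finset.sum_pi_single']
        norm_num
      rw [heq, hc, div_pow, Real.sq_sqrt (by norm_num : (0:ℝ) ≤ 2)]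
      norm_num
  obtain ⟨v0, hv0K, hv0min⟩ := hKc.exists_isMinOn hKne hQcont.continuousOn
  refine ⟨Q v0, ?_, ?_⟩
  · rcases lt_or_eq_of_le (hpsd2 v0) with h | h
    · exact h
    · exfalso
      obtain ⟨c, hcv⟩ := hker v0 (by rw [htriple]; exact h.symm)
      have hsum := hv0K.1
      rw [hcv] at hsum
      rw [Finset.sum_const, Finset.card_univ, Fintype.card_fin, nsmul_eq_mul] at hsum
      have hc0 : c = 0 := by
        have hN0 : (N:ℝ) ≠ 0 := by positivity
        rcases mul_eq_zero.mp hsum with h' | h'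
        · exact absurd h' hN0
        · exact h'
      have h2 := hv0K.2
      rw [hcv, hc0] at h2
      simp at h2
  · intro v hv
    rcases eq_or_ne (∑ i, (v i)^2) 0 with h0 | h0
    · have hv0 : v = 0 := by
        funext i
        have h1 : (v i)^2 = 0 := le_antisymm
          (h0 ▸ Finset.single_le_sum (fun j _ => sq_nonneg (v j)) (Finset.mem_univ i)) (sq_nonneg _)
        simpa using pow_eq_zero_iff (n := 2) (by norm_num) |>.mp h1
      rw [hv0]
      have hz : ∑ i : Fin N, ((0 : Fin N → ℝ) i)^2 = 0 := by simp
      rw [hz, mul_zero]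
      exact hpsd2 0
    · have hpos : 0 < ∑ i, (v i)^2 :=
        lt_of_le_of_ne (Finset.sum_nonneg fun i _ => sq_nonneg _) (Ne.symm h0)
      set s : ℝ := Real.sqrt (∑ i, (v i)^2) with hs
      have hspos : 0 < s := Real.sqrt_pos.mpr hpos
      have hs2 : s * s = ∑ i, (v i)^2 := Real.mul_self_sqrt hpos.le
      have hw : (s⁻¹ • v) ∈ K := by
        constructor
        · simp only [Pi.smul_apply, smul_eq_mul, ← Finset.mul_sum, hv, mul_zero]
        · have he : ∑ i, ((s⁻¹ • v) i)^2 = (s⁻¹)^2 * ∑ i, (v i)^2 := by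
            simp only [Pi.smul_apply, smul_eq_mul, mul_pow, ← Finset.mul_sum]
          rw [he, inv_pow, sq, hs2, inv_mul_cancel₀ h0]
      have hmin : Q v0 ≤ Q (s⁻¹ • v) := hv0min hw
      have hQw : Q (s⁻¹ • v) = s⁻¹ * (s⁻¹ * Q v) := by
        simp [hQ, smul_dotProduct, Matrix.mulVec_smul, dotProduct_smul,
          smul_eq_mul, mul_assoc]
      rw [hQw] at hmin
      have h3 := mul_le_mul_of_nonneg_right hmin (le_of_lt (mul_pos hspos hspos))
      have h4 : (s⁻¹ * (s⁻¹ * Q v)) * (s * s) = Q v := by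
        field_simp
      rw [h4] at h3
      show Q v0 * ∑ i, (v i)^2 ≤ Q v
      rw [← hs2]
      exact h3

lemma dual_bound {N : ℕ} (hN : 2 ≤ N) (G : Matrix (Fin N) (Fin N) ℝ)
    (hsym : G.IsSymm) (hpsd : G.PosSemidef)
    (hGe : G.mulVec (fun _ => (1 : ℝ)) = 0)
    (hker : ∀ u : Fin N → ℝ, (∑ i, ∑ j, u i * G i j * u j) = 0 →
      ∃ c : ℝ, u = fun _ => c)
    (x xs : Fin N → ℝ) (hx : ∑ i, x i = 0) (hxs : ∑ i, xs i = 0)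
    (R : ℝ) (hR : 0 < R)
    (hS : sSup {r : ℝ | ∃ u : Fin N → ℝ,
          (∑ i, ∑ j, u i * G i j * u j) ≤ 1 ∧
            r = ∑ i, (x i - xs i) * u i} ≤ R)
    (g : Fin N → ℝ) :
    ∑ i, (x i - xs i) * g i ≤ R * Real.sqrt (∑ i, ∑ j, g i * G i j * g j) := by
  have hpsd2 : ∀ u : Fin N → ℝ, 0 ≤ u ⬝ᵥ G.mulVec u := fun u => by simpa using hpsd.dotProduct_mulVec_nonneg u
  have htriple : ∀ u v : Fin N → ℝ, ∑ i, ∑ j, u i * G i j * v j = u ⬝ᵥ G.mulVec v := by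
    intro u v
    simp [dotProduct, Matrix.mulVec, Finset.mul_sum, mul_assoc]
  have hrow : ∀ i, ∑ j, G i j = 0 := by
    intro i
    have := congrFun hGe i
    simpa [Matrix.mulVec, dotProduct] using this
  have hcol : ∀ j, ∑ i, G i j = 0 := by
    intro j
    calc ∑ i, G i j = ∑ i, G j i := Finset.sum_congr rfl fun i _ => hsym.apply j i
      _ = 0 := hrow j
  obtain ⟨m, hm, hml⟩ := quad_lower hN G hpsd hker
  set w : Fin N → ℝ := fun i => x i - xs i with hwdef
  have hw : ∑ i, w i = 0 := by
    simp only [hwdef]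
    rw [Finset.sum_sub_distrib, hx, hxs, sub_zero]
  set B : ℝ := Real.sqrt ((∑ i, (w i)^2) * (1/m)) with hB
  -- every element of the dual set is ≤ B
  have hub : ∀ r ∈ {r : ℝ | ∃ u : Fin N → ℝ,
      (∑ i, ∑ j, u i * G i j * u j) ≤ 1 ∧ r = ∑ i, (x i - xs i) * u i}, r ≤ B := by
    rintro r ⟨u, hu1, rfl⟩
    rw [htriple] at hu1
    set c : ℝ := (∑ i, u i) / N with hc
    set v : Fin N → ℝ := fun i => u i - c with hv
    have hNne : (N:ℝ) ≠ 0 := by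
      have : 0 < N := by omega
      positivity
    have hvsum : ∑ i, v i = 0 := by
      simp only [hv]
      rw [Finset.sum_sub_distrib, Finset.sum_const, Finset.card_univ, Fintype.card_fin,
        nsmul_eq_mul, hc]
      field_simp
      simp
    have hsum0 : ∑ i, (G.mulVec u) i = 0 := by
      simp only [Matrix.mulVec, dotProduct]
      rw [Finset.sum_comm]
      refine Finset.sum_eq_zero fun j _ => ?_
      rw [← Finset.sum_mul, hcol j, zero_mul]
    have hveq : v = u - (fun _ => c) := by funext i; simp [hv]
    have hmv0 : G.mulVec (fun _ => c) = 0 := by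
      have : (fun _ : Fin N => c) = c • (fun _ : Fin N => (1:ℝ)) := by funext i; simp
      rw [this, Matrix.mulVec_smul, hGe, smul_zero]
    have hcd : (fun _ => c) ⬝ᵥ G.mulVec u = 0 := by
      simp only [dotProduct]
      rw [← Finset.mul_sum, hsum0, mul_zero]
    have hQv : v ⬝ᵥ G.mulVec v = u ⬝ᵥ G.mulVec u := by
      rw [hveq, Matrix.mulVec_sub, hmv0, sub_zero, sub_dotProduct, hcd, sub_zero]
    have hv2 : ∑ i, (v i)^2 ≤ 1/m := by
      have h1 := hml v hvsum
      rw [hQv] at h1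
      rw [le_div_iff₀ hm]
      nlinarith
    have hwu : ∑ i, w i * u i = ∑ i, w i * v i := by
      have : ∀ i, w i * u i = w i * v i + c * w i := by
        intro i; simp only [hv]; ring
      rw [Finset.sum_congr rfl fun i _ => this i, Finset.sum_add_distrib,
        ← Finset.mul_sum, hw, mul_zero, add_zero]
    have hCS : (∑ i, w i * v i)^2 ≤ (∑ i, (w i)^2) * ∑ i, (v i)^2 :=
      Finset.sum_mul_sq_le_sq_mul_sq _ _ _
    have hBnn : 0 ≤ B := Real.sqrt_nonneg _
    show ∑ i, w i * u i ≤ B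
    rw [hwu]
    rcases le_or_gt (∑ i, w i * v i) 0 with hneg | hposi
    · linarith
    · rw [hB]
      rw [show (∑ i, w i * v i) = Real.sqrt ((∑ i, w i * v i)^2) from
        (Real.sqrt_sq hposi.le).symm]
      apply Real.sqrt_le_sqrt
      calc (∑ i, w i * v i)^2 ≤ (∑ i, (w i)^2) * ∑ i, (v i)^2 := hCS
        _ ≤ (∑ i, (w i)^2) * (1/m) := by
            apply mul_le_mul_of_nonneg_left hv2 (Finset.sum_nonneg fun i _ => sq_nonneg _)
  have hbdd : BddAbove {r : ℝ | ∃ u : Fin N → ℝ,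
      (∑ i, ∑ j, u i * G i j * u j) ≤ 1 ∧ r = ∑ i, (x i - xs i) * u i} := ⟨B, hub⟩
  -- main argument
  set s : ℝ := ∑ i, ∑ j, g i * G i j * g j with hsdef
  have hsnn : 0 ≤ s := by rw [hsdef, htriple]; exact hpsd2 g
  rcases eq_or_lt_of_le hsnn with hs0 | hspos
  · obtain ⟨c, hgc⟩ := hker g hs0.symm
    have : ∑ i, (x i - xs i) * g i = 0 := by
      rw [hgc]
      have : ∀ i, (x i - xs i) * c = c * w i := fun i => by simp only [hwdef]; ring
      rw [Finset.sum_congr rfl fun i _ => this i, ← Finset.mul_sum, hw, mul_zero]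
    rw [this]
    positivity
  · set t : ℝ := (Real.sqrt s)⁻¹ with ht
    have hsq : Real.sqrt s > 0 := Real.sqrt_pos.mpr hspos
    have htpos : 0 < t := inv_pos.mpr hsq
    set u : Fin N → ℝ := fun i => t * g i with hu
    have hQu : ∑ i, ∑ j, u i * G i j * u j = t * t * s := by
      rw [hsdef, Finset.mul_sum]
      refine Finset.sum_congr rfl fun i _ => ?_
      rw [Finset.mul_sum]
      refine Finset.sum_congr rfl fun j _ => ?_
      simp only [hu]
      ring
    have hQu1 : ∑ i, ∑ j, u i * G i j * u j ≤ 1 := by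
      rw [hQu]
      have : t * t * s = 1 := by
        rw [ht, ← mul_inv, Real.mul_self_sqrt hsnn, inv_mul_cancel₀ hspos.ne']
      rw [this]
    have hmem : (∑ i, (x i - xs i) * u i) ∈ {r : ℝ | ∃ u : Fin N → ℝ,
        (∑ i, ∑ j, u i * G i j * u j) ≤ 1 ∧ r = ∑ i, (x i - xs i) * u i} := ⟨u, hQu1, rfl⟩
    have hle : (∑ i, (x i - xs i) * u i) ≤ R := le_trans (le_csSup hbdd hmem) hS
    have hfin : ∑ i, (x i - xs i) * g i = Real.sqrt s * ∑ i, (x i - xs i) * u i := by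
      rw [Finset.mul_sum]
      refine Finset.sum_congr rfl fun i _ => ?_
      simp only [hu, ht]
      field_simp
    rw [hfin]
    calc Real.sqrt s * ∑ i, (x i - xs i) * u i ≤ Real.sqrt s * R :=
          mul_le_mul_of_nonneg_left hle hsq.le
      _ = R * Real.sqrt s := mul_comm _ _

lemma key_det {N : ℕ} (hN : 2 ≤ N) (G : Matrix (Fin N) (Fin N) ℝ)
    (hsym : G.IsSymm) (hpsd : G.PosSemidef)
    (hGe : G.mulVec (fun _ => (1 : ℝ)) = 0)
    (hker : ∀ u : Fin N → ℝ, (∑ i, ∑ j, u i * G i j * u j) = 0 →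
      ∃ c : ℝ, u = fun _ => c)
    (f : (Fin N → ℝ) → ℝ) (hconv : ConvexOn ℝ Set.univ f)
    (hdiff : Differentiable ℝ f) (fstar : ℝ)
    (x xs : Fin N → ℝ) (hx : ∑ i, x i = 0) (hxs : ∑ i, xs i = 0)
    (hfxs : f xs = fstar) (hmin : fstar ≤ f x)
    (R : ℝ) (hR : 0 < R)
    (hS : sSup {r : ℝ | ∃ u : Fin N → ℝ,
          (∑ i, ∑ j, u i * G i j * u j) ≤ 1 ∧
            r = ∑ i, (x i - xs i) * u i} ≤ R) :
    (f x - fstar)^2 ≤ R^2 * ∑ i, ∑ j, gradVec N f x i * G i j * gradVec N f x j := by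
  have hpsd2 : ∀ u : Fin N → ℝ, 0 ≤ u ⬝ᵥ G.mulVec u := fun u => by simpa using hpsd.dotProduct_mulVec_nonneg u
  have htriple : ∀ u v : Fin N → ℝ, ∑ i, ∑ j, u i * G i j * v j = u ⬝ᵥ G.mulVec v := by
    intro u v
    simp [dotProduct, Matrix.mulVec, Finset.mul_sum, mul_assoc]
  set g : Fin N → ℝ := gradVec N f x with hg
  set s : ℝ := ∑ i, ∑ j, g i * G i j * g j with hs
  have hsnn : 0 ≤ s := by rw [hs, htriple]; exact hpsd2 g
  have hgrad := grad_ineq f hconv hdiff x xs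
  have hL : fderiv ℝ f x (xs - x) = ∑ i, (xs i - x i) * g i := by
    rw [clm_sum (fderiv ℝ f x) (xs - x)]
    refine Finset.sum_congr rfl fun i _ => ?_
    simp [hg, gradVec]
  have hflip : ∑ i, (x i - xs i) * g i = -∑ i, (xs i - x i) * g i := by
    rw [← Finset.sum_neg_distrib]
    exact Finset.sum_congr rfl fun i _ => by ring
  have h1 : f x - fstar ≤ ∑ i, (x i - xs i) * g i := by
    rw [hflip]
    rw [hL] at hgrad
    linarith [hfxs ▸ hgrad]
  have h2 := dual_bound hN G hsym hpsd hGe hker x xs hx hxs R hR hS g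
  have h3 : f x - fstar ≤ R * Real.sqrt s := le_trans h1 h2
  have h4 : 0 ≤ f x - fstar := by linarith
  calc (f x - fstar)^2 ≤ (R * Real.sqrt s)^2 := by nlinarith
    _ = R^2 * s := by rw [mul_pow, Real.sq_sqrt hsnn]


end Aux

open Matrix in
/-- Sublinear rate `E[f(X_k)] − f* ≤ 2R²/k` for a random descent
scheme with expected decrease `(1/2) ∇f(X_k)ᵀ G ∇f(X_k)`. -/
theorem stmt_10 (N : ℕ) (hN : 2 ≤ N) (G : Matrix (Fin N) (Fin N) ℝ)
    (hsym : G.IsSymm) (hpsd : G.PosSemidef)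
    (hGe : G.mulVec (fun _ => (1 : ℝ)) = 0)
    (hker : ∀ u : Fin N → ℝ, (∑ i, ∑ j, u i * G i j * u j) = 0 →
      ∃ c : ℝ, u = fun _ => c)
    (f : (Fin N → ℝ) → ℝ) (hconv : ConvexOn ℝ Set.univ f)
    (hdiff : Differentiable ℝ f)
    (fstar : ℝ)
    (hattain : ∃ xs : Fin N → ℝ, (∑ i, xs i = 0) ∧ f xs = fstar ∧
      ∀ x : Fin N → ℝ, (∑ i, x i = 0) → fstar ≤ f x)
    {Ω : Type} [MeasurableSpace Ω] (μ : Measure Ω) [IsProbabilityMeasure μ]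
    (𝓕 : Filtration ℕ ‹MeasurableSpace Ω›)
    (x0 : Fin N → ℝ) (hx0 : ∑ i, x0 i = 0)
    (X : ℕ → Ω → (Fin N → ℝ)) (hadapt : Adapted 𝓕 X)
    (hX0 : ∀ᵐ ω ∂μ, X 0 ω = x0)
    (hint : ∀ k, Integrable (fun ω => f (X k ω)) μ)
    (hfeas : ∀ k, ∀ᵐ ω ∂μ, ∑ i, X k ω i = 0)
    (hdec : ∀ k, ∀ᵐ ω ∂μ, f (X (k + 1) ω) ≤ f (X k ω))
    (hexp : ∀ k, ∀ᵐ ω ∂μ,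
      (μ[(fun ω' => f (X (k + 1) ω')) | 𝓕 k]) ω ≤ f (X k ω) -
        (1 / 2) * ∑ i, ∑ j,
          gradVec N f (X k ω) i * G i j * gradVec N f (X k ω) j)
    (R : ℝ) (hR : 0 < R)
    (hRad : ∀ x : Fin N → ℝ, (∑ i, x i = 0) → f x ≤ f x0 →
      ∃ xs : Fin N → ℝ, (∑ i, xs i = 0) ∧ f xs = fstar ∧
        sSup {r : ℝ | ∃ u : Fin N → ℝ,
          (∑ i, ∑ j, u i * G i j * u j) ≤ 1 ∧
            r = ∑ i, (x i - xs i) * u i} ≤ R) :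
    ∀ k : ℕ, 1 ≤ k → (∫ ω, f (X k ω) ∂μ) - fstar ≤ 2 * R ^ 2 / k := by
  have hpsd2 : ∀ u : Fin N → ℝ, 0 ≤ u ⬝ᵥ G.mulVec u := fun u => by simpa using hpsd.dotProduct_mulVec_nonneg u
  have htriple : ∀ u v : Fin N → ℝ, ∑ i, ∑ j, u i * G i j * v j = u ⬝ᵥ G.mulVec v := by
    intro u v
    simp [dotProduct, Matrix.mulVec, Finset.mul_sum, mul_assoc]
  -- measurability
  have hXm : ∀ k, Measurable (X k) := fun k => (hadapt k).mono (𝓕.le k) le_rfl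
  have hfc : Continuous f := hdiff.continuous
  have hfXm : ∀ k, Measurable fun ω => f (X k ω) := fun k => hfc.measurable.comp (hXm k)
  set D : ℕ → Ω → ℝ := fun k ω =>
    ∑ i, ∑ j, gradVec N f (X k ω) i * G i j * gradVec N f (X k ω) j with hD
  have hDm : ∀ k, Measurable (D k) := by
    intro k
    apply Finset.measurable_sum
    intro i _
    apply Finset.measurable_sum
    intro j _
    have h1 : Measurable fun ω => gradVec N f (X k ω) i :=
      (measurable_fderiv_apply_const ℝ f (Pi.single i 1)).comp (hXm k)
    have h2 : Measurable fun ω => gradVec N f (X k ω) j :=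
      (measurable_fderiv_apply_const ℝ f (Pi.single j 1)).comp (hXm k)
    exact (h1.mul_const (G i j)).mul h2
  have hDnn : ∀ k ω, 0 ≤ D k ω := by
    intro k ω
    show (0:ℝ) ≤ ∑ i, ∑ j, gradVec N f (X k ω) i * G i j * gradVec N f (X k ω) j
    rw [htriple]
    exact hpsd2 _
  have hexp' : ∀ k, ∀ᵐ ω ∂μ,
      (μ[(fun ω' => f (X (k + 1) ω')) | 𝓕 k]) ω ≤ f (X k ω) - (1/2) * D k ω := by
    intro k
    filter_upwards [hexp k] with ω h
    exact h
  have hDint : ∀ k, Integrable (D k) μ := by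
    intro k
    have hbd : Integrable (fun ω =>
        2 * (f (X k ω) - (μ[(fun ω' => f (X (k+1) ω')) | 𝓕 k]) ω)) μ :=
      ((hint k).sub integrable_condExp).const_mul 2
    refine hbd.mono' (hDm k).aestronglyMeasurable ?_
    filter_upwards [hexp' k] with ω hω
    rw [Real.norm_of_nonneg (hDnn k ω)]
    linarith
  -- a.e. facts
  obtain ⟨xsm, hxsm_sum, hxsm_f, hxsm_min⟩ := hattain
  have hflow : ∀ k, ∀ᵐ ω ∂μ, fstar ≤ f (X k ω) := by
    intro k
    filter_upwards [hfeas k] with ω h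
    exact hxsm_min _ h
  have hchain : ∀ k, ∀ᵐ ω ∂μ, f (X k ω) ≤ f x0 := by
    intro k
    induction k with
    | zero => filter_upwards [hX0] with ω h; rw [h]
    | succ n ih => filter_upwards [ih, hdec n] with ω h1 h2; linarith
  have hkey : ∀ k, ∀ᵐ ω ∂μ, (f (X k ω) - fstar)^2 ≤ R^2 * D k ω := by
    intro k
    filter_upwards [hfeas k, hchain k] with ω h1 h2
    obtain ⟨xs, hxs1, hxs2, hxs3⟩ := hRad (X k ω) h1 h2
    exact key_det hN G hsym hpsd hGe hker f hconv hdiff fstar (X k ω) xs h1 hxs1 hxs2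
      (hxsm_min _ h1) R hR hxs3
  -- integrability of squared gap
  have hY2m : ∀ k, Measurable fun ω => (f (X k ω) - fstar)^2 := fun k =>
    ((hfXm k).sub_const fstar).pow_const 2
  have hY2int : ∀ k, Integrable (fun ω => (f (X k ω) - fstar)^2) μ := by
    intro k
    refine ((hDint k).const_mul (R^2)).mono' (hY2m k).aestronglyMeasurable ?_
    filter_upwards [hkey k] with ω h
    rw [Real.norm_of_nonneg (sq_nonneg _)]
    exact h
  -- Jensen: (E Y)^2 ≤ E Y^2
  have hJ : ∀ k, (∫ ω, (f (X k ω) - fstar) ∂μ)^2 ≤ ∫ ω, (f (X k ω) - fstar)^2 ∂μ := by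
    intro k
    have hYint : Integrable (fun ω => f (X k ω) - fstar) μ := (hint k).sub (integrable_const fstar)
    set c : ℝ := ∫ ω, (f (X k ω) - fstar) ∂μ with hc
    have hnn : 0 ≤ ∫ ω, ((f (X k ω) - fstar) - c)^2 ∂μ := integral_nonneg fun ω => sq_nonneg _
    have hexpand : (fun ω => ((f (X k ω) - fstar) - c)^2)
        = fun ω => ((f (X k ω) - fstar)^2 - (2*c) * (f (X k ω) - fstar)) + c^2 := by
      funext ω; ring
    rw [hexpand] at hnn
    have hintsub : Integrable
        (fun ω => (f (X k ω) - fstar)^2 - (2*c) * (f (X k ω) - fstar)) μ :=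
      (hY2int k).sub (hYint.const_mul (2*c))
    have e1 : ∫ ω, (((f (X k ω) - fstar)^2 - (2*c) * (f (X k ω) - fstar)) + c^2) ∂μ
        = ∫ ω, ((f (X k ω) - fstar)^2 - (2*c) * (f (X k ω) - fstar)) ∂μ
          + ∫ (_ : Ω), c^2 ∂μ :=
      integral_add hintsub (integrable_const _)
    have e2 : ∫ ω, ((f (X k ω) - fstar)^2 - (2*c) * (f (X k ω) - fstar)) ∂μ
        = ∫ ω, (f (X k ω) - fstar)^2 ∂μ - ∫ ω, (2*c) * (f (X k ω) - fstar) ∂μ :=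
      integral_sub (hY2int k) (hYint.const_mul (2*c))
    have e3 : ∫ ω, (2*c) * (f (X k ω) - fstar) ∂μ = (2*c) * c := by
      rw [integral_const_mul, ← hc]
    have e4 : ∫ (_ : Ω), c^2 ∂μ = c^2 := by simp
    rw [e1, e2, e3, e4] at hnn
    nlinarith [hnn]
  -- expected descent
  have hstep : ∀ k, ∫ ω, f (X (k+1) ω) ∂μ ≤ ∫ ω, f (X k ω) ∂μ - (1/2) * ∫ ω, D k ω ∂μ := by
    intro k
    have h1 : ∫ ω, f (X (k+1) ω) ∂μ = ∫ ω, (μ[(fun ω' => f (X (k+1) ω')) | 𝓕 k]) ω ∂μ :=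
      (integral_condExp (𝓕.le k)).symm
    rw [h1]
    have h2 : ∫ ω, (μ[(fun ω' => f (X (k+1) ω')) | 𝓕 k]) ω ∂μ
        ≤ ∫ ω, (f (X k ω) - (1/2) * D k ω) ∂μ :=
      integral_mono_ae integrable_condExp ((hint k).sub ((hDint k).const_mul (1/2))) (hexp' k)
    calc _ ≤ ∫ ω, (f (X k ω) - (1/2) * D k ω) ∂μ := h2
      _ = ∫ ω, f (X k ω) ∂μ - (1/2) * ∫ ω, D k ω ∂μ := by
          rw [integral_sub (hint k) ((hDint k).const_mul (1/2)), integral_const_mul]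
  -- lower bound on E D
  have hDlow : ∀ k, ((∫ ω, f (X k ω) ∂μ) - fstar)^2 ≤ R^2 * ∫ ω, D k ω ∂μ := by
    intro k
    have h1 : ∫ ω, (f (X k ω) - fstar)^2 ∂μ ≤ ∫ ω, R^2 * D k ω ∂μ :=
      integral_mono_ae (hY2int k) ((hDint k).const_mul _) (hkey k)
    rw [integral_const_mul] at h1
    have h2 : ∫ ω, (f (X k ω) - fstar) ∂μ = (∫ ω, f (X k ω) ∂μ) - fstar := by
      rw [integral_sub (hint k) (integrable_const _)]
      simp
    calc ((∫ ω, f (X k ω) ∂μ) - fstar)^2 = (∫ ω, (f (X k ω) - fstar) ∂μ)^2 := by rw [h2]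
      _ ≤ ∫ ω, (f (X k ω) - fstar)^2 ∂μ := hJ k
      _ ≤ R^2 * ∫ ω, D k ω ∂μ := h1
  -- the gap sequence
  set δ : ℕ → ℝ := fun k => (∫ ω, f (X k ω) ∂μ) - fstar with hδ
  have hδnn : ∀ k, 0 ≤ δ k := by
    intro k
    have h1 : ∫ (_ : Ω), fstar ∂μ ≤ ∫ ω, f (X k ω) ∂μ :=
      integral_mono_ae (integrable_const fstar) (hint k) (hflow k)
    have h2 : ∫ (_ : Ω), fstar ∂μ = fstar := by simp
    show 0 ≤ (∫ ω, f (X k ω) ∂μ) - fstar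
    linarith [h2 ▸ h1]
  have hrec : ∀ k, δ (k+1) ≤ δ k - (δ k)^2 / (2 * R^2) := by
    intro k
    have h1 := hstep k
    have h2 := hDlow k
    have hR2 : (0:ℝ) < R^2 := by positivity
    have h3 : (δ k)^2 / R^2 ≤ ∫ ω, D k ω ∂μ := by
      rw [div_le_iff₀ hR2]
      show ((∫ ω, f (X k ω) ∂μ) - fstar)^2 ≤ (∫ ω, D k ω ∂μ) * R^2
      linarith [h2]
    show (∫ ω, f (X (k+1) ω) ∂μ) - fstar
        ≤ ((∫ ω, f (X k ω) ∂μ) - fstar) - ((∫ ω, f (X k ω) ∂μ) - fstar)^2 / (2 * R^2)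
    have h4 : ((∫ ω, f (X k ω) ∂μ) - fstar)^2 / (2 * R^2)
        = (1/2) * (((∫ ω, f (X k ω) ∂μ) - fstar)^2 / R^2) := by ring
    have h3' : ((∫ ω, f (X k ω) ∂μ) - fstar)^2 / R^2 ≤ ∫ ω, D k ω ∂μ := h3
    linarith
  -- conclusion by induction
  suffices h : ∀ n : ℕ, 1 ≤ n → δ n ≤ 2 * R^2 / n by
    intro k hk
    exact h k hk
  intro n hn
  induction n with
  | zero => omega
  | succ p ih =>
    rcases Nat.eq_zero_or_pos p with rfl | hp
    · have h1 := rate_step R (δ 0) (δ 1) 1 hR (hδnn 0)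
        le_rfl (fun h => absurd h (by norm_num)) (hrec 0)
      have h2 : 2*R^2/((1:ℝ)+1) = R^2 := by ring
      rw [h2] at h1
      show δ (0+1) ≤ 2*R^2 / (((0:ℕ)+1 : ℕ) : ℝ)
      norm_num
      linarith [h1, sq_nonneg R]
    · have ihp := ih hp
      have hKge : (1:ℝ) ≤ (p:ℝ) := by exact_mod_cast hp
      have haK : 2 ≤ (p:ℝ) → δ p * (p:ℝ) ≤ 2*R^2 := by
        intro h2
        have hppos : (0:ℝ) < (p:ℝ) := by linarith
        calc δ p * (p:ℝ) ≤ (2*R^2/(p:ℝ)) * (p:ℝ) :=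
              mul_le_mul_of_nonneg_right ihp hppos.le
          _ = 2*R^2 := by field_simp
      have hfin := rate_step R (δ p) (δ (p+1)) (p:ℝ) hR (hδnn p) hKge haK (hrec p)
      push_cast
      exact hfin
end

section
/- Let N ≥ 2, let G be an N×N symmetric positive semidefinite real matrix with G e = 0 and such that uᵀGu = 0 implies u is a scalar multiple of e, let σ > 0, and let f : ℝ^N → ℝ be differentiable and satisfy the strong convexity inequality f(x) ≥ f(y) + ⟨∇f(y), x − y⟩ + (σ/2) (‖x − y‖*_G)² for all x, y ∈ S. Suppose f attains its minimum value f* over S. Then ∇f(y)ᵀ G ∇f(y) ≥ 2σ (f(y) − f*) for every y ∈ S. -/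
lemma quad_nonneg' {N : ℕ} (G : Matrix (Fin N) (Fin N) ℝ) (hpsd : G.PosSemidef)
    (u : Fin N → ℝ) : 0 ≤ ∑ i, ∑ j, u i * G i j * u j := by
  have h := hpsd.dotProduct_mulVec_nonneg u
  simpa [dotProduct, Matrix.mulVec, Finset.mul_sum, mul_assoc] using h

lemma quad_smul' {N : ℕ} (G : Matrix (Fin N) (Fin N) ℝ) (t : ℝ) (u : Fin N → ℝ) :
    ∑ i, ∑ j, (t • u) i * G i j * (t • u) j = t ^ 2 * ∑ i, ∑ j, u i * G i j * u j := by
  rw [Finset.mul_sum]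
  refine Finset.sum_congr rfl fun i _ => ?_
  rw [Finset.mul_sum]
  refine Finset.sum_congr rfl fun j _ => ?_
  simp [Pi.smul_apply, smul_eq_mul]; ring

lemma coercive' {N : ℕ} (hN : 2 ≤ N) (G : Matrix (Fin N) (Fin N) ℝ) (hpsd : G.PosSemidef)
    (hker : ∀ u : Fin N → ℝ, (∑ i, ∑ j, u i * G i j * u j) = 0 → ∃ c : ℝ, u = fun _ => c) :
    ∃ m : ℝ, 0 < m ∧ ∀ w : Fin N → ℝ, (∑ i, w i = 0) →
      m * (∑ i, (w i) ^ 2) ≤ ∑ i, ∑ j, w i * G i j * w j := by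
  set K : Set (Fin N → ℝ) := {w | (∑ i, w i = 0) ∧ (∑ i, (w i) ^ 2) = 1} with hK
  have c1 : Continuous fun w : Fin N → ℝ => ∑ i, w i :=
    continuous_finset_sum _ fun i _ => continuous_apply i
  have c2 : Continuous fun w : Fin N → ℝ => ∑ i, (w i) ^ 2 :=
    continuous_finset_sum _ fun i _ => (continuous_apply i).pow 2
  have cq : Continuous fun w : Fin N → ℝ => ∑ i, ∑ j, w i * G i j * w j :=
    continuous_finset_sum _ fun i _ => continuous_finset_sum _ fun j _ =>
      ((continuous_apply i).mul continuous_const).mul (continuous_apply j)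
  have hKclosed : IsClosed K :=
    (isClosed_eq c1 continuous_const).inter (isClosed_eq c2 continuous_const)
  have hKbdd : Bornology.IsBounded K := by
    apply (Metric.isBounded_closedBall (x := (0 : Fin N → ℝ)) (r := 1)).subset
    intro w hw
    rw [Metric.mem_closedBall, dist_zero_right]
    rw [pi_norm_le_iff_of_nonneg (by norm_num : (0:ℝ) ≤ 1)]
    intro i
    have h1 : (w i) ^ 2 ≤ 1 := by
      have h2 := Finset.single_le_sum (f := fun j => (w j) ^ 2)
        (fun j _ => sq_nonneg _) (Finset.mem_univ i)
      rw [hw.2] at h2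
      exact h2
    rw [Real.norm_eq_abs]
    nlinarith [abs_nonneg (w i), sq_abs (w i)]
  have hKcompact : IsCompact K :=
    Metric.isCompact_of_isClosed_isBounded hKclosed hKbdd
  have hKne : K.Nonempty := by
    have h0 : (0:ℕ) < N := by omega
    have h1 : (1:ℕ) < N := by omega
    set i0 : Fin N := ⟨0, h0⟩
    set i1 : Fin N := ⟨1, h1⟩
    have hne : i0 ≠ i1 := by simp [i0, i1, Fin.ext_iff]
    set a : ℝ := Real.sqrt (1 / 2) with ha
    have ha2 : a ^ 2 = 1 / 2 := Real.sq_sqrt (by norm_num)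
    set w1 : Fin N → ℝ := Pi.single i0 a + Pi.single i1 (-a) with hw1
    refine ⟨w1, ?_, ?_⟩
    · show (∑ i, w1 i) = 0
      simp only [hw1, Pi.add_apply, Pi.single_apply, Finset.sum_add_distrib,
        Finset.sum_ite_eq', Finset.mem_univ, if_true]
      ring
    · show (∑ i, (w1 i) ^ 2) = 1
      have key : ∀ i, (w1 i) ^ 2
          = (if i = i0 then a ^ 2 else 0) + (if i = i1 then a ^ 2 else 0) := by
        intro i
        rcases eq_or_ne i i0 with rfl | h
        · simp [hw1, Pi.single_apply, hne]
        · rcases eq_or_ne i i1 with rfl | h'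
          · simp [hw1, Pi.single_apply, hne, h]
          · simp [hw1, Pi.single_apply, h, h']
      rw [Finset.sum_congr rfl fun i _ => key i, Finset.sum_add_distrib]
      rw [Finset.sum_ite_eq' Finset.univ i0 (fun _ => a ^ 2),
        Finset.sum_ite_eq' Finset.univ i1 (fun _ => a ^ 2)]
      simp [ha2]
      norm_num
  obtain ⟨w0, hw0K, hmin⟩ := hKcompact.exists_isMinOn hKne cq.continuousOn
  refine ⟨∑ i, ∑ j, w0 i * G i j * w0 j, ?_, ?_⟩
  · rcases (quad_nonneg' G hpsd w0).lt_or_eq with h | h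
    · exact h
    · exfalso
      obtain ⟨c, hc⟩ := hker w0 h.symm
      have hsum := hw0K.1
      rw [hc] at hsum
      simp [Finset.sum_const, Finset.card_univ] at hsum
      have hNne : (N:ℝ) ≠ 0 := Nat.cast_ne_zero.2 (by omega)
      have hcz : c = 0 := by
        rcases hsum with h' | h'
        · omega
        · exact h'
      have h2 := hw0K.2
      rw [hc, hcz] at h2
      simp at h2
  · intro w hwsum
    rcases (Finset.sum_nonneg fun i (_ : i ∈ Finset.univ) => sq_nonneg (w i)).lt_or_eq with h | h
    · set s : ℝ := ∑ i, (w i) ^ 2 with hs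
      set t : ℝ := (Real.sqrt s)⁻¹ with ht
      have hsq : Real.sqrt s ^ 2 = s := Real.sq_sqrt h.le
      have hsgt : 0 < Real.sqrt s := Real.sqrt_pos.2 h
      have hts : t ^ 2 * s = 1 := by
        rw [ht, inv_pow, hsq, inv_mul_cancel₀ h.ne']
      have hmem : (t • w) ∈ K := by
        constructor
        · show (∑ i, (t • w) i) = 0
          simp only [Pi.smul_apply, smul_eq_mul, ← Finset.mul_sum]
          rw [hwsum, mul_zero]
        · show (∑ i, ((t • w) i) ^ 2) = 1
          simp only [Pi.smul_apply, smul_eq_mul, mul_pow, ← Finset.mul_sum]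
          rw [← hs] at *
          exact hts
      have hle : (∑ i, ∑ j, w0 i * G i j * w0 j)
          ≤ ∑ i, ∑ j, (t • w) i * G i j * (t • w) j := hmin hmem
      rw [quad_smul' G t w] at hle
      have := mul_le_mul_of_nonneg_right hle h.le
      calc (∑ i, ∑ j, w0 i * G i j * w0 j) * s
          ≤ (t ^ 2 * ∑ i, ∑ j, w i * G i j * w j) * s := this
        _ = (t ^ 2 * s) * ∑ i, ∑ j, w i * G i j * w j := by ring
        _ = ∑ i, ∑ j, w i * G i j * w j := by rw [hts, one_mul]
    · rw [← h, mul_zero]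
      exact quad_nonneg' G hpsd w

lemma bdd' {N : ℕ} (hN : 2 ≤ N) (G : Matrix (Fin N) (Fin N) ℝ)
    (hsym : G.IsSymm) (hpsd : G.PosSemidef)
    (hGe : G.mulVec (fun _ => (1 : ℝ)) = 0)
    (hker : ∀ u : Fin N → ℝ, (∑ i, ∑ j, u i * G i j * u j) = 0 → ∃ c : ℝ, u = fun _ => c)
    (v : Fin N → ℝ) (hv : ∑ i, v i = 0) :
    BddAbove {r : ℝ | ∃ u : Fin N → ℝ,
      (∑ i, ∑ j, u i * G i j * u j) ≤ 1 ∧ r = ∑ i, v i * u i} := by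
  obtain ⟨m, hm, hcoer⟩ := coercive' hN G hpsd hker
  have hrow : ∀ i, ∑ j, G i j = 0 := by
    intro i
    have h := congrFun hGe i
    simpa [Matrix.mulVec, dotProduct] using h
  have hcol : ∀ j, ∑ i, G i j = 0 := by
    intro j
    calc ∑ i, G i j = ∑ i, G j i := Finset.sum_congr rfl fun i _ => hsym.apply j i
      _ = 0 := hrow j
  refine ⟨Real.sqrt ((∑ i, (v i) ^ 2) / m), ?_⟩
  rintro r ⟨u, hu, rfl⟩
  have hNne : (N:ℝ) ≠ 0 := Nat.cast_ne_zero.2 (by omega)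
  set c : ℝ := (∑ i, u i) / N with hc
  set w : Fin N → ℝ := fun i => u i - c with hw
  have hwsum : ∑ i, w i = 0 := by
    simp only [hw, Finset.sum_sub_distrib, Finset.sum_const, Finset.card_univ,
      Fintype.card_fin, nsmul_eq_mul, hc]
    field_simp; ring
  have hqw : ∑ i, ∑ j, w i * G i j * w j = ∑ i, ∑ j, u i * G i j * u j := by
    have expand : ∀ i j, w i * G i j * w j
        = u i * G i j * u j - c * (G i j * u j) - u i * G i j * c + c * G i j * c := by
      intro i j; simp only [hw]; ring
    rw [Finset.sum_congr rfl fun i _ => Finset.sum_congr rfl fun j _ => expand i j]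
    simp only [Finset.sum_add_distrib, Finset.sum_sub_distrib]
    have hB : ∑ i, ∑ j, c * (G i j * u j) = 0 := by
      rw [Finset.sum_comm]
      have h1 : ∀ j, ∑ i, c * (G i j * u j) = c * u j * ∑ i, G i j := by
        intro j; rw [Finset.mul_sum]; exact Finset.sum_congr rfl fun i _ => by ring
      rw [Finset.sum_congr rfl fun j _ => h1 j]
      simp [hcol]
    have hC : ∑ i, ∑ j, u i * G i j * c = 0 := by
      have h1 : ∀ i, ∑ j, u i * G i j * c = u i * c * ∑ j, G i j := by
        intro i; rw [Finset.mul_sum]; exact Finset.sum_congr rfl fun j _ => by ring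
      rw [Finset.sum_congr rfl fun i _ => h1 i]
      simp [hrow]
    have hD : ∑ i, ∑ j, c * G i j * c = 0 := by
      have h1 : ∀ i, ∑ j, c * G i j * c = c * c * ∑ j, G i j := by
        intro i; rw [Finset.mul_sum]; exact Finset.sum_congr rfl fun j _ => by ring
      rw [Finset.sum_congr rfl fun i _ => h1 i]
      simp [hrow]
    rw [hB, hC, hD]
    ring
  have hvw : ∑ i, v i * u i = ∑ i, v i * w i := by
    have h1 : ∑ i, v i * w i = ∑ i, v i * u i - (∑ i, v i) * c := by
      simp only [hw, mul_sub, Finset.sum_sub_distrib, Finset.sum_mul]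
    rw [h1, hv]; ring
  rw [hvw]
  have hws : m * (∑ i, (w i) ^ 2) ≤ 1 := le_trans (hcoer w hwsum) (by rw [hqw]; exact hu)
  have hw2 : (∑ i, (w i) ^ 2) ≤ 1 / m := by
    rw [le_div_iff₀ hm]; linarith
  have hcs := Finset.sum_mul_sq_le_sq_mul_sq Finset.univ v w
  have h1 : (∑ i, v i * w i) ^ 2 ≤ (∑ i, (v i) ^ 2) / m := by
    calc (∑ i, v i * w i) ^ 2 ≤ (∑ i, (v i) ^ 2) * (∑ i, (w i) ^ 2) := hcs
      _ ≤ (∑ i, (v i) ^ 2) * (1 / m) :=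
          mul_le_mul_of_nonneg_left hw2 (Finset.sum_nonneg fun i _ => sq_nonneg _)
      _ = (∑ i, (v i) ^ 2) / m := by ring
  calc ∑ i, v i * w i ≤ |∑ i, v i * w i| := le_abs_self _
    _ = Real.sqrt ((∑ i, v i * w i) ^ 2) := (Real.sqrt_sq_eq_abs _).symm
    _ ≤ Real.sqrt ((∑ i, (v i) ^ 2) / m) := Real.sqrt_le_sqrt h1

/-- For a function `f` that is `σ`-strongly convex on `S` with
respect to the dual norm `‖·‖*_G`, one has
`∇f(y)ᵀ G ∇f(y) ≥ 2σ (f(y) − f*)` for every `y ∈ S`. -/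
theorem stmt_11 (N : ℕ) (hN : 2 ≤ N) (G : Matrix (Fin N) (Fin N) ℝ)
    (hsym : G.IsSymm) (hpsd : G.PosSemidef)
    (hGe : G.mulVec (fun _ => (1 : ℝ)) = 0)
    (hker : ∀ u : Fin N → ℝ, (∑ i, ∑ j, u i * G i j * u j) = 0 →
      ∃ c : ℝ, u = fun _ => c)
    (σ : ℝ) (hσ : 0 < σ)
    (f : (Fin N → ℝ) → ℝ) (hdiff : Differentiable ℝ f)
    (hsc : ∀ x y : Fin N → ℝ, (∑ i, x i = 0) → (∑ i, y i = 0) →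
      f y + fderiv ℝ f y (x - y) + (σ / 2) *
        (sSup {r : ℝ | ∃ u : Fin N → ℝ,
          (∑ i, ∑ j, u i * G i j * u j) ≤ 1 ∧
            r = ∑ i, (x i - y i) * u i}) ^ 2 ≤ f x)
    (fstar : ℝ)
    (hattain : ∃ xs : Fin N → ℝ, (∑ i, xs i = 0) ∧ f xs = fstar ∧
      ∀ x : Fin N → ℝ, (∑ i, x i = 0) → fstar ≤ f x)
    (y : Fin N → ℝ) (hy : ∑ i, y i = 0) :
    2 * σ * (f y - fstar) ≤
      ∑ i, ∑ j, gradVec N f y i * G i j * gradVec N f y j := by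
  obtain ⟨xs, hxs, hfxs, hmin⟩ := hattain
  set g : Fin N → ℝ := gradVec N f y with hgdef
  -- linearity of the derivative
  have hlin : fderiv ℝ f y (xs - y) = ∑ i, (xs i - y i) * g i := by
    have hrepr : (xs - y) = ∑ i, (xs i - y i) • (Pi.single i (1:ℝ) : Fin N → ℝ) := by
      funext j
      rw [Finset.sum_apply]
      simp only [Pi.smul_apply, Pi.single_apply, smul_eq_mul, mul_ite, mul_one, mul_zero]
      rw [Finset.sum_ite_eq Finset.univ j (fun i => xs i - y i)]
      simp
    rw [hrepr, map_sum]
    refine Finset.sum_congr rfl fun i _ => ?_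
    rw [map_smul]
    simp [hgdef, gradVec, smul_eq_mul]
  have hkey := hsc xs y hxs hy
  rw [hlin, hfxs] at hkey
  set D := sSup {r : ℝ | ∃ u : Fin N → ℝ,
      (∑ i, ∑ j, u i * G i j * u j) ≤ 1 ∧
        r = ∑ i, (xs i - y i) * u i} with hD
  set L := ∑ i, (xs i - y i) * g i with hL
  have hvsum : ∑ i, (xs i - y i) = 0 := by
    rw [Finset.sum_sub_distrib, hxs, hy]; ring
  have hbd := bdd' hN G hsym hpsd hGe hker (fun i => xs i - y i) hvsum
  have hQ0 : 0 ≤ ∑ i, ∑ j, g i * G i j * g j := quad_nonneg' G hpsd g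
  rcases hQ0.lt_or_eq with hQ | hQ
  · -- positive case
    set Q := ∑ i, ∑ j, g i * G i j * g j with hQdef
    have hs : 0 < Real.sqrt Q := Real.sqrt_pos.2 hQ
    have hs2 : Real.sqrt Q ^ 2 = Q := Real.sq_sqrt hQ.le
    set u0 : Fin N → ℝ := (-(Real.sqrt Q)⁻¹) • g with hu0
    have hu0q : ∑ i, ∑ j, u0 i * G i j * u0 j ≤ 1 := by
      rw [hu0, quad_smul' G (-(Real.sqrt Q)⁻¹) g, ← hQdef]
      rw [neg_pow, inv_pow, hs2]
      norm_num [hQ.ne']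
    have hr0mem : (∑ i, (xs i - y i) * u0 i) ∈ {r : ℝ | ∃ u : Fin N → ℝ,
        (∑ i, ∑ j, u i * G i j * u j) ≤ 1 ∧ r = ∑ i, (xs i - y i) * u i} :=
      ⟨u0, hu0q, rfl⟩
    have hr0 : (∑ i, (xs i - y i) * u0 i) ≤ D := le_csSup hbd hr0mem
    have hr0L : ∑ i, (xs i - y i) * u0 i = -(Real.sqrt Q)⁻¹ * L := by
      rw [hL, Finset.mul_sum]
      refine Finset.sum_congr rfl fun i _ => ?_
      simp [hu0]; ring
    have hsl : -L ≤ Real.sqrt Q * D := by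
      rw [hr0L] at hr0
      have h2 := mul_le_mul_of_nonneg_left hr0 hs.le
      calc -L = Real.sqrt Q * (-(Real.sqrt Q)⁻¹ * L) := by
            field_simp
        _ ≤ Real.sqrt Q * D := h2
    nlinarith [hkey, hσ, hsl, hs2, sq_nonneg (Real.sqrt Q - σ * D), hs, sq_nonneg D]
  · -- kernel case
    obtain ⟨c, hc⟩ := hker g hQ.symm
    have hLz : L = 0 := by
      rw [hL]
      have : ∀ i, (xs i - y i) * g i = (xs i - y i) * c := by
        intro i; rw [hc]
      rw [Finset.sum_congr rfl fun i _ => this i, ← Finset.sum_mul, hvsum, zero_mul]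
    rw [← hQ]
    have h3 : f y - fstar ≤ 0 := by
      nlinarith [mul_nonneg hσ.le (sq_nonneg D), hkey, hLz]
    nlinarith [h3, hσ, mul_nonneg hσ.le (neg_nonneg.2 h3)]
end

section
/- Let N ≥ 2, 2 ≤ τ ≤ N, and L_1, …, L_N > 0. For each subset 𝒮 ⊆ {1,…,N} with |𝒮| = τ, define the probability p_𝒮 = (Σ_{i∈𝒮} 1/L_i) / (C(N−1, τ−1) · Σ_{i=1}^N 1/L_i), where C(·,·) is the binomial coefficient. Then the p_𝒮 are nonnegative and sum to 1 over all τ-element subsets, and Σ_{𝒮 : |𝒮|=τ} p_𝒮 G_𝒮 = ((τ−1)/(N−1)) · ( D_L^{-1} − (1/(Σ_{i=1}^N 1/L_i)) · ℓ ℓᵀ ), where D_L is the diagonal matrix with diagonal entries L_1, …, L_N and ℓ ∈ ℝ^N is the vector with entries ℓ_i = 1/L_i. -/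
lemma aux_count {α : Type*} [DecidableEq α] {s t : Finset α} (ht : t ⊆ s)
    {τ : ℕ} (hτ : t.card ≤ τ) :
    ((s.powersetCard τ).filter (fun 𝒮 => t ⊆ 𝒮)).card
      = (s.card - t.card).choose (τ - t.card) := by
  rw [← Finset.card_sdiff_of_subset ht, ← Finset.card_powersetCard (τ - t.card) (s \ t)]
  apply Finset.card_bij' (fun 𝒮 _ => 𝒮 \ t) (fun 𝒮' _ => 𝒮' ∪ t)
  · intro 𝒮 h𝒮
    simp only [Finset.mem_filter, Finset.mem_powersetCard] at h𝒮 ⊢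
    exact ⟨Finset.sdiff_subset_sdiff h𝒮.1.1 Finset.Subset.rfl,
      by rw [Finset.card_sdiff_of_subset h𝒮.2, h𝒮.1.2]⟩
  · intro 𝒮' h𝒮'
    simp only [Finset.mem_filter, Finset.mem_powersetCard] at h𝒮' ⊢
    have hd : Disjoint 𝒮' t := Finset.disjoint_of_subset_left h𝒮'.1 Finset.sdiff_disjoint
    refine ⟨⟨Finset.union_subset (h𝒮'.1.trans Finset.sdiff_subset) ht, ?_⟩,
      Finset.subset_union_right⟩
    rw [Finset.card_union_of_disjoint hd, h𝒮'.2]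
    omega
  · intro 𝒮 h𝒮
    simp only [Finset.mem_filter] at h𝒮
    exact Finset.sdiff_union_of_subset h𝒮.2
  · intro 𝒮' h𝒮'
    simp only [Finset.mem_powersetCard] at h𝒮'
    have hd : Disjoint 𝒮' t := Finset.disjoint_of_subset_left h𝒮'.1 Finset.sdiff_disjoint
    rw [Finset.union_sdiff_distrib, Finset.sdiff_self, Finset.union_empty, hd.sdiff_eq_left]

lemma aux_double_count {α : Type*} [DecidableEq α] (F : Finset (Finset α)) (s : Finset α)
    (hF : ∀ 𝒮 ∈ F, 𝒮 ⊆ s) (f : α → ℝ) :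
    ∑ 𝒮 ∈ F, ∑ k ∈ 𝒮, f k
      = ∑ k ∈ s, ((F.filter (fun 𝒮 => k ∈ 𝒮)).card : ℝ) * f k := by
  calc ∑ 𝒮 ∈ F, ∑ k ∈ 𝒮, f k
      = ∑ 𝒮 ∈ F, ∑ k ∈ s, if k ∈ 𝒮 then f k else 0 := by
        refine Finset.sum_congr rfl fun 𝒮 h𝒮 => ?_
        rw [Finset.sum_ite_mem, Finset.inter_eq_right.2 (hF 𝒮 h𝒮)]
    _ = ∑ k ∈ s, ∑ 𝒮 ∈ F, if k ∈ 𝒮 then f k else 0 := Finset.sum_comm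
    _ = _ := by
        refine Finset.sum_congr rfl fun k _ => ?_
        rw [← Finset.sum_filter, Finset.sum_const, nsmul_eq_mul]


/-- For the Lipschitz-dependent probabilities
`p_𝒮 = (∑_{i∈𝒮} 1/L_i) / (C(N−1,τ−1) ∑_i 1/L_i)` over `τ`-element subsets
`𝒮`, the probabilities are nonnegative, sum to one, and
`∑_𝒮 p_𝒮 G_𝒮 = ((τ−1)/(N−1)) (D_L⁻¹ − (1/∑_i 1/L_i) ℓℓᵀ)`. -/
theorem stmt_13 (N τ : ℕ) (hN : 2 ≤ N) (hτ1 : 2 ≤ τ) (hτ2 : τ ≤ N)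
    (L : Fin N → ℝ) (hL : ∀ i, 0 < L i)
    (p : Finset (Fin N) → ℝ)
    (hp : ∀ 𝒮 : Finset (Fin N), p 𝒮 =
      (∑ i ∈ 𝒮, 1 / L i) /
        (((N - 1).choose (τ - 1) : ℝ) * ∑ i, 1 / L i)) :
    (∀ 𝒮 : Finset (Fin N), 0 ≤ p 𝒮) ∧
    (∑ 𝒮 ∈ Finset.univ.powersetCard τ, p 𝒮 = 1) ∧
    (∑ 𝒮 ∈ Finset.univ.powersetCard τ, p 𝒮 • GNmat N L 𝒮 =
      (((τ : ℝ) - 1) / ((N : ℝ) - 1)) • Matrix.of (fun i j : Fin N =>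
        (if i = j then 1 / L i else 0) -
          (1 / (L i * L j)) / (∑ k, 1 / L k))) := by
  have : NeZero N := ⟨by omega⟩
  have hlpos : ∀ i, 0 < 1 / L i := fun i => one_div_pos.2 (hL i)
  set S : ℝ := ∑ i, 1 / L i with hSdef
  have hS : 0 < S := Finset.sum_pos (fun i _ => hlpos i) Finset.univ_nonempty
  have hcu : (Finset.univ : Finset (Fin N)).card = N := by
    rw [Finset.card_univ, Fintype.card_fin]
  have hC1pos : 0 < ((N - 1).choose (τ - 1)) := Nat.choose_pos (by omega)
  set C1 : ℝ := ((N - 1).choose (τ - 1) : ℝ) with hC1def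
  set C2 : ℝ := ((N - 2).choose (τ - 2) : ℝ) with hC2def
  have hC1 : 0 < C1 := by rw [hC1def]; exact_mod_cast hC1pos
  -- key binomial identity
  have hkey : ((N : ℝ) - 1) * C2 = ((τ : ℝ) - 1) * C1 := by
    have h := Nat.add_one_mul_choose_eq (N - 2) (τ - 2)
    have e1 : N - 2 + 1 = N - 1 := by omega
    have e2 : τ - 2 + 1 = τ - 1 := by omega
    rw [e1, e2] at h
    have h2 := congrArg (fun n : ℕ => (n : ℝ)) h
    push_cast [Nat.cast_sub (show 1 ≤ N by omega), Nat.cast_sub (show 1 ≤ τ by omega)] at h2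
    rw [hC1def, hC2def]
    linarith
  -- counting subsets containing one element
  have hcount1 : ∀ i : Fin N,
      ((Finset.univ.powersetCard τ).filter (fun 𝒮 => i ∈ 𝒮)).card
        = (N - 1).choose (τ - 1) := by
    intro i
    have : ((Finset.univ.powersetCard τ).filter (fun 𝒮 => i ∈ 𝒮))
        = ((Finset.univ.powersetCard τ).filter (fun 𝒮 => ({i} : Finset (Fin N)) ⊆ 𝒮)) := by
      simp [Finset.singleton_subset_iff]
    rw [this, aux_count (Finset.subset_univ _) (by simp; omega)]
    simp [hcu]
  -- counting subsets containing two distinct elements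
  have hcount2 : ∀ i j : Fin N, i ≠ j →
      ((Finset.univ.powersetCard τ).filter (fun 𝒮 => i ∈ 𝒮 ∧ j ∈ 𝒮)).card
        = (N - 2).choose (τ - 2) := by
    intro i j hij
    have : ((Finset.univ.powersetCard τ).filter (fun 𝒮 => i ∈ 𝒮 ∧ j ∈ 𝒮))
        = ((Finset.univ.powersetCard τ).filter
            (fun 𝒮 => ({i, j} : Finset (Fin N)) ⊆ 𝒮)) := by
      simp [Finset.insert_subset_iff, Finset.singleton_subset_iff]
    have hc : ({i, j} : Finset (Fin N)).card = 2 := by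
      rw [Finset.card_insert_of_notMem (by simpa using hij), Finset.card_singleton]
    rw [this, aux_count (Finset.subset_univ _) (by rw [hc]; omega), hc, hcu]
  -- positivity of sums over nonempty subsets
  have hSsub : ∀ 𝒮 : Finset (Fin N), 𝒮.Nonempty → 0 < ∑ k ∈ 𝒮, 1 / L k :=
    fun 𝒮 h => Finset.sum_pos (fun k _ => hlpos k) h
  refine ⟨?_, ?_, ?_⟩
  · intro 𝒮
    rw [hp]
    exact div_nonneg (Finset.sum_nonneg fun i _ => (hlpos i).le)
      (mul_pos hC1 hS).le
  · simp only [hp]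
    rw [← Finset.sum_div]
    rw [aux_double_count _ Finset.univ
      (fun 𝒮 h𝒮 => (Finset.mem_powersetCard.1 h𝒮).1) (fun k => 1 / L k)]
    have : ∀ k : Fin N,
        (((Finset.univ.powersetCard τ).filter (fun 𝒮 => k ∈ 𝒮)).card : ℝ) * (1 / L k)
          = C1 * (1 / L k) := by
      intro k; rw [hcount1 k]
    rw [Finset.sum_congr rfl (fun k _ => this k), ← Finset.mul_sum, ← hSdef]
    exact div_self (ne_of_gt (mul_pos hC1 hS))
  · ext i j
    simp only [Matrix.sum_apply, Matrix.smul_apply, GNmat, Matrix.of_apply, smul_eq_mul,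
      mul_ite, mul_zero, mul_sub]
    rw [← Finset.sum_filter]
    have hN1 : (N : ℝ) - 1 ≠ 0 := by
      have h2 : (2 : ℝ) ≤ (N : ℝ) := by exact_mod_cast hN
      linarith
    by_cases hij : i = j
    · subst hij
      simp only [and_self, if_pos rfl, if_true, eq_self_iff_true]
      have hterm : ∀ a ∈ (Finset.univ.powersetCard τ).filter (fun a => i ∈ a),
          p a * (1 / L i) - p a * (1 / (L i * L i) / ∑ k ∈ a, 1 / L k)
            = ((1 / L i) * (∑ k ∈ a, 1 / L k) - 1 / (L i * L i)) / (C1 * S) := by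
        intro a ha
        have hmem := Finset.mem_filter.1 ha
        have hpos : 0 < ∑ k ∈ a, 1 / L k := hSsub a ⟨i, hmem.2⟩
        rw [hp]
        have hLi := (hL i).ne'
        field_simp
      rw [Finset.sum_congr rfl hterm, ← Finset.sum_div, Finset.sum_sub_distrib,
        ← Finset.mul_sum, Finset.sum_const, nsmul_eq_mul]
      have hT : ∑ a ∈ (Finset.univ.powersetCard τ).filter (fun a => i ∈ a),
          ∑ k ∈ a, 1 / L k = C1 * (1 / L i) + C2 * (S - 1 / L i) := by
        rw [aux_double_count _ Finset.univ
          (fun 𝒮 h𝒮 => (Finset.mem_powersetCard.1 (Finset.mem_filter.1 h𝒮).1).1)]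
        have hcnt : ∀ k : Fin N,
            ((((Finset.univ.powersetCard τ).filter (fun a => i ∈ a)).filter
              (fun 𝒮 => k ∈ 𝒮)).card : ℝ) = if k = i then C1 else C2 := by
          intro k
          rw [Finset.filter_filter]
          by_cases hk : k = i
          · subst hk
            simp only [and_self, eq_self_iff_true, if_true]
            rw [hC1def]
            exact_mod_cast hcount1 k
          · rw [if_neg hk, hC2def]
            exact_mod_cast hcount2 i k (fun h => hk h.symm)
        rw [Finset.sum_congr rfl (fun k _ => by rw [hcnt k])]
        have hsplit : ∀ k : Fin N, (if k = i then C1 else C2) * (1 / L k)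
            = C2 * (1 / L k) + (if k = i then (C1 - C2) * (1 / L k) else 0) := by
          intro k
          by_cases hk : k = i <;> simp [hk] <;> ring
        rw [Finset.sum_congr rfl (fun k _ => hsplit k), Finset.sum_add_distrib,
          ← Finset.mul_sum, Finset.sum_ite_eq' Finset.univ i, if_pos (Finset.mem_univ i)]
        rw [← hSdef]
        ring
      rw [hT, hcount1 i, ← hC1def]
      have hLi := (hL i).ne'
      field_simp
      linear_combination (L i * S - 1) * hkey
    · simp only [if_neg hij]
      have hterm : ∀ a ∈ (Finset.univ.powersetCard τ).filter (fun a => i ∈ a ∧ j ∈ a),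
          0 - p a * (1 / (L i * L j) / ∑ k ∈ a, 1 / L k)
            = -(1 / (L i * L j) / (C1 * S)) := by
        intro a ha
        have hmem := Finset.mem_filter.1 ha
        have hpos : 0 < ∑ k ∈ a, 1 / L k := hSsub a ⟨i, hmem.2.1⟩
        rw [hp]
        have hLi := (hL i).ne'
        have hLj := (hL j).ne'
        field_simp
        ring
      rw [Finset.sum_congr rfl hterm, Finset.sum_const, hcount2 i j hij, nsmul_eq_mul,
        ← hC2def]
      have hLi := (hL i).ne'
      have hLj := (hL j).ne'
      field_simp
      linear_combination (-1 : ℝ) * hkey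
end

section
/- Let N ≥ 2, 2 ≤ τ ≤ N with τ < N or N ≥ 2, and L_1, …, L_N > 0. Let G = ((τ−1)/(N−1)) · ( D_L^{-1} − (1/(Σ_{i=1}^N 1/L_i)) · ℓ ℓᵀ ), where D_L is the diagonal matrix with diagonal entries L_1, …, L_N and ℓ ∈ ℝ^N has entries ℓ_i = 1/L_i. Then for every x ∈ S, ( sup{⟨x,u⟩ : u ∈ ℝ^N, uᵀGu ≤ 1} )² = ((N−1)/(τ−1)) · Σ_{i=1}^N L_i x_i². -/
/-- For `G = ((τ−1)/(N−1)) (D_L⁻¹ − (1/∑_i 1/L_i) ℓℓᵀ)`, the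
squared dual norm on `S` is `((N−1)/(τ−1)) ∑_i L_i x_i²`. -/
theorem stmt_14 (N τ : ℕ) (hN : 2 ≤ N) (hτ1 : 2 ≤ τ) (hτ2 : τ ≤ N)
    (L : Fin N → ℝ) (hL : ∀ i, 0 < L i)
    (G : Matrix (Fin N) (Fin N) ℝ)
    (hG : G = (((τ : ℝ) - 1) / ((N : ℝ) - 1)) • Matrix.of (fun i j : Fin N =>
      (if i = j then 1 / L i else 0) - (1 / (L i * L j)) / (∑ k, 1 / L k)))
    (x : Fin N → ℝ) (hx : ∑ i, x i = 0) :
    (sSup {r : ℝ | ∃ u : Fin N → ℝ,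
        (∑ i, ∑ j, u i * G i j * u j) ≤ 1 ∧ r = ∑ i, x i * u i}) ^ 2
      = (((N : ℝ) - 1) / ((τ : ℝ) - 1)) * ∑ i, L i * (x i) ^ 2 := by
  have hN1 : (0:ℝ) < (N:ℝ) - 1 := by
    have : (2:ℝ) ≤ (N:ℝ) := by exact_mod_cast hN
    linarith
  have hτ1' : (0:ℝ) < (τ:ℝ) - 1 := by
    have : (2:ℝ) ≤ (τ:ℝ) := by exact_mod_cast hτ1
    linarith
  set c : ℝ := ((τ:ℝ)-1)/((N:ℝ)-1) with hcdef
  have hc : 0 < c := div_pos hτ1' hN1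
  have : NeZero N := ⟨by omega⟩
  set s : ℝ := ∑ k, 1 / L k with hsdef
  have hs : 0 < s := Finset.sum_pos (fun i _ => by have := hL i; positivity) Finset.univ_nonempty
  -- quadratic form identity
  have hquad : ∀ u : Fin N → ℝ, (∑ i, ∑ j, u i * G i j * u j)
      = c * ((∑ i, (u i)^2 / L i) - (∑ i, u i / L i)^2 / s) := by
    intro u
    subst hG
    simp only [Matrix.smul_apply, Matrix.of_apply, smul_eq_mul, ← hsdef, ← hcdef]
    have h1 : ∀ i j : Fin N,
        u i * (c * ((if i = j then 1 / L i else 0) - 1/(L i * L j)/s)) * u j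
        = c * ((if i = j then u j * u j / L j else 0) - (u i / L i) * (u j / L j) / s) := by
      intro i j
      by_cases h : i = j
      · subst h; rw [if_pos (rfl : i = i), if_pos (rfl : i = i)]; field_simp
      · simp only [if_neg h]; field_simp; ring
    simp only [h1, ← Finset.mul_sum, Finset.sum_sub_distrib, Finset.sum_ite_eq,
      Finset.mem_univ, if_true]
    congr 1
    congr 1
    · exact Finset.sum_congr rfl fun i _ => by ring
    · rw [sq, Finset.sum_mul_sum, Finset.sum_div]
      exact (Finset.sum_congr rfl fun i _ => by rw [Finset.sum_div]).symm
  -- Cauchy-Schwarz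
  have hCS : ∀ u : Fin N → ℝ, (∑ i, x i * u i)^2
      ≤ (∑ i, L i * (x i)^2) * ((∑ i, (u i)^2 / L i) - (∑ i, u i / L i)^2 / s) := by
    intro u
    set t : ℝ := (∑ i, u i / L i) / s with htdef
    have h1 : (∑ i, x i * u i)
        = ∑ i, (Real.sqrt (L i) * x i) * ((u i - t) / Real.sqrt (L i)) := by
      have : ∀ i : Fin N, (Real.sqrt (L i) * x i) * ((u i - t) / Real.sqrt (L i))
          = x i * u i - t * x i := by
        intro i
        have hLi : Real.sqrt (L i) ≠ 0 := by
          have := hL i; positivity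
        field_simp
      simp only [this, Finset.sum_sub_distrib, ← Finset.mul_sum, hx, mul_zero, sub_zero]
    have h2 : ∑ i, (Real.sqrt (L i) * x i)^2 = ∑ i, L i * (x i)^2 := by
      refine Finset.sum_congr rfl fun i _ => ?_
      rw [mul_pow, Real.sq_sqrt (hL i).le]
    have h3 : ∑ i, ((u i - t) / Real.sqrt (L i))^2
        = (∑ i, (u i)^2 / L i) - (∑ i, u i / L i)^2 / s := by
      have e1 : ∀ i : Fin N, ((u i - t) / Real.sqrt (L i))^2
          = (u i)^2 / L i - 2 * t * (u i / L i) + t^2 * (1 / L i) := by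
        intro i
        rw [div_pow, Real.sq_sqrt (hL i).le]
        have := (hL i).ne'
        field_simp
        ring
      simp only [e1, Finset.sum_add_distrib, Finset.sum_sub_distrib, ← Finset.mul_sum,
        ← hsdef]
      rw [htdef]
      field_simp
      ring
    calc (∑ i, x i * u i)^2
        = (∑ i, (Real.sqrt (L i) * x i) * ((u i - t) / Real.sqrt (L i)))^2 := by rw [h1]
      _ ≤ (∑ i, (Real.sqrt (L i) * x i)^2) * (∑ i, ((u i - t) / Real.sqrt (L i))^2) :=
          Finset.sum_mul_sq_le_sq_mul_sq _ _ _
      _ = _ := by rw [h2, h3]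
  set K : ℝ := (1/c) * ∑ i, L i * (x i)^2 with hKdef
  have hsum_nonneg : (0:ℝ) ≤ ∑ i, L i * (x i)^2 :=
    Finset.sum_nonneg fun i _ => by have := hL i; positivity
  have hK0 : 0 ≤ K := by positivity
  have hRHS : (((N : ℝ) - 1) / ((τ : ℝ) - 1)) * ∑ i, L i * (x i) ^ 2 = K := by
    rw [hKdef, hcdef]
    rw [one_div_div]
  rw [hRHS]
  rcases eq_or_lt_of_le hK0 with hK | hK
  · -- K = 0 : x = 0
    have hsum0 : ∑ i, L i * (x i)^2 = 0 := by
      have := hK.symm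
      rw [hKdef] at this
      rcases mul_eq_zero.mp this with h | h
      · exact absurd h (by positivity)
      · exact h
    have hx0 : ∀ i, x i = 0 := by
      intro i
      have := (Finset.sum_eq_zero_iff_of_nonneg
        (fun i _ => by have := hL i; positivity)).mp hsum0 i (Finset.mem_univ i)
      have hLi := (hL i).ne'
      have hx2 : (x i)^2 = 0 := (mul_eq_zero.mp this).resolve_left hLi
      exact pow_eq_zero_iff (by norm_num) |>.mp hx2
    have hset : {r : ℝ | ∃ u : Fin N → ℝ,
        (∑ i, ∑ j, u i * G i j * u j) ≤ 1 ∧ r = ∑ i, x i * u i} = {0} := by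
      ext r
      simp only [Set.mem_setOf_eq, Set.mem_singleton_iff]
      constructor
      · rintro ⟨u, -, rfl⟩
        simp [hx0]
      · rintro rfl
        exact ⟨0, by rw [hquad]; simp, by simp⟩
    rw [hset, csSup_singleton, ← hK]
    norm_num
  · -- K > 0
    have hsK : 0 < Real.sqrt K := Real.sqrt_pos.mpr hK
    have hsKsq : Real.sqrt K ^ 2 = K := Real.sq_sqrt hK0
    have hsumK : ∑ i, L i * (x i)^2 = c * K := by
      rw [hKdef]; field_simp
    have hIG : IsGreatest {r : ℝ | ∃ u : Fin N → ℝ,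
        (∑ i, ∑ j, u i * G i j * u j) ≤ 1 ∧ r = ∑ i, x i * u i} (Real.sqrt K) := by
      constructor
      · refine ⟨fun i => L i * x i / (c * Real.sqrt K), ?_, ?_⟩
        · rw [hquad]
          have e1 : ∑ i, (L i * x i / (c * Real.sqrt K)) / L i
              = (∑ i, x i) / (c * Real.sqrt K) := by
            rw [Finset.sum_div]
            refine Finset.sum_congr rfl fun i _ => ?_
            have := (hL i).ne'
            field_simp
          have e2 : ∑ i, (L i * x i / (c * Real.sqrt K))^2 / L i
              = (∑ i, L i * (x i)^2) / (c * Real.sqrt K)^2 := by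
            rw [Finset.sum_div]
            refine Finset.sum_congr rfl fun i _ => ?_
            have := (hL i).ne'
            field_simp
          rw [e1, e2, hx, hsumK]
          rw [mul_pow, hsKsq]
          rw [show c * (c * K / (c ^ 2 * K) - (0 / (c * Real.sqrt K)) ^ 2 / s) = 1 by
            field_simp; ring]
        · show Real.sqrt K = ∑ i, x i * (L i * x i / (c * Real.sqrt K))
          symm
          rw [Finset.sum_congr rfl (fun i (_ : i ∈ Finset.univ) => by
              show x i * (L i * x i / (c * Real.sqrt K)) = L i * (x i)^2 / (c * Real.sqrt K)
              ring), ← Finset.sum_div, hsumK]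
          rw [div_eq_iff (by positivity)]
          linear_combination (-c) * hsKsq
      · rintro r ⟨u, hu1, rfl⟩
        have hE : (∑ i, (u i)^2 / L i) - (∑ i, u i / L i)^2 / s ≤ 1 / c := by
          rw [hquad] at hu1
          rw [le_div_iff₀ hc, mul_comm]
          exact hu1
        have hr2 : (∑ i, x i * u i)^2 ≤ K := by
          calc (∑ i, x i * u i)^2
              ≤ (∑ i, L i * (x i)^2) * ((∑ i, (u i)^2 / L i) - (∑ i, u i / L i)^2 / s) :=
                hCS u
            _ ≤ (∑ i, L i * (x i)^2) * (1 / c) := by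
                exact mul_le_mul_of_nonneg_left hE hsum_nonneg
            _ = K := by rw [hKdef]; ring
        calc (∑ i, x i * u i) ≤ |∑ i, x i * u i| := le_abs_self _
          _ ≤ Real.sqrt K := Real.abs_le_sqrt hr2
    rw [hIG.csSup_eq, hsKsq]
end

section
/- Let N ≥ 2, 2 ≤ τ ≤ N, and L_1, …, L_N > 0, and let G = ((τ−1)/(N−1)) · ( D_L^{-1} − (1/(Σ_{i=1}^N 1/L_i)) · ℓ ℓᵀ ), where D_L is the diagonal matrix with diagonal entries L_1, …, L_N and ℓ_i = 1/L_i. Let f : ℝ^N → ℝ be convex and differentiable and attain its minimum value f* over S. Let R_1, …, R_N > 0 be such that for every x ∈ S with f(x) ≤ f(x⁰) there exists a minimizer x* of f over S with |x_i − x_i*| ≤ R_i for all i. Let (Ω, 𝓕, μ) be a probability space with a filtration (𝓕_k)_{k≥0}, x⁰ ∈ S, and (X_k)_{k≥0} an adapted sequence of ℝ^N-valued random variables with X_0 = x⁰ almost surely, each f(X_k) integrable, and, almost surely for every k: X_k ∈ S, f(X_{k+1}) ≤ f(X_k), and E[f(X_{k+1}) | 𝓕_k] ≤ f(X_k) − (1/2)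 ∇f(X_k)ᵀ G ∇f(X_k). Then for every k ≥ 1, E[f(X_k)] − f* ≤ ((N−1)/(τ−1)) · (2 Σ_{i=1}^N L_i R_i²) / k. -/
open MeasureTheory

lemma grad_ineq_aux {N : ℕ} {f : (Fin N → ℝ) → ℝ} (hconv : ConvexOn ℝ Set.univ f)
    (hdiff : Differentiable ℝ f) (x y : Fin N → ℝ) :
    fderiv ℝ f x (y - x) ≤ f y - f x := by
  set d : Fin N → ℝ := y - x with hd
  have h1 : HasDerivAt (fun t : ℝ => x + t • d) d 0 := by
    simpa using ((hasDerivAt_id (0:ℝ)).smul_const d).const_add x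
  have hg : HasDerivAt (fun t : ℝ => f (x + t • d)) (fderiv ℝ f x d) 0 := by
    have h2 : HasFDerivAt f (fderiv ℝ f x) ((fun t : ℝ => x + t • d) 0) := by
      simpa using (hdiff x).hasFDerivAt
    exact h2.comp_hasDerivAt 0 h1
  have hgc : ConvexOn ℝ Set.univ (fun t : ℝ => f (x + t • d)) := by
    have := hconv.comp_affineMap (AffineMap.lineMap (x : Fin N → ℝ) (x + d))
    have he : (fun t : ℝ => f (x + t • d))
        = f ∘ (AffineMap.lineMap (x : Fin N → ℝ) (x + d)) := by
      ext t; simp [Function.comp, AffineMap.lineMap_apply, add_comm]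
    rw [he]
    simpa using this
  have := hgc.le_slope_of_hasDerivAt (Set.mem_univ (0:ℝ)) (Set.mem_univ (1:ℝ))
    one_pos hg
  simp only [slope_def_field] at this
  have hx1 : x + (1:ℝ) • d = y := by simp [hd]
  have hx0 : x + (0:ℝ) • d = x := by simp
  rw [hx1, hx0] at this
  simpa using this

lemma fderiv_eq_sum {N : ℕ} {f : (Fin N → ℝ) → ℝ}
    (x v : Fin N → ℝ) :
    fderiv ℝ f x v = ∑ i, v i * gradVec N f x i := by
  have hv : v = ∑ i, v i • (Pi.single i (1:ℝ) : Fin N → ℝ) := by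
    ext j
    simp [Finset.sum_apply, Pi.single_apply]
  conv_lhs => rw [hv]
  rw [map_sum]
  refine Finset.sum_congr rfl fun i _ => ?_
  simp [gradVec, smul_eq_mul]

lemma Q_nonneg' {N : ℕ} (L : Fin N → ℝ) (hL : ∀ i, 0 < L i) (g : Fin N → ℝ)
    (hσ : 0 < ∑ i, 1 / L i) :
    (∑ i, g i / L i) ^ 2 / (∑ i, 1 / L i) ≤ ∑ i, g i ^ 2 / L i := by
  have hcs := Finset.sum_mul_sq_le_sq_mul_sq Finset.univ
    (fun i : Fin N => 1 / Real.sqrt (L i)) (fun i => g i / Real.sqrt (L i))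
  have h1 : ∀ i : Fin N, 1 / Real.sqrt (L i) * (g i / Real.sqrt (L i)) = g i / L i := by
    intro i
    rw [div_mul_div_comm, one_mul, Real.mul_self_sqrt (hL i).le]
  have h2 : ∀ i : Fin N, (1 / Real.sqrt (L i)) ^ 2 = 1 / L i := by
    intro i; rw [div_pow, one_pow, Real.sq_sqrt (hL i).le]
  have h3 : ∀ i : Fin N, (g i / Real.sqrt (L i)) ^ 2 = g i ^ 2 / L i := by
    intro i; rw [div_pow, Real.sq_sqrt (hL i).le]
  simp_rw [h1, h2, h3] at hcs
  rw [div_le_iff₀ hσ]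
  linarith [hcs]

lemma key_quad {N : ℕ} (hNpos : 0 < N) (L : Fin N → ℝ) (hL : ∀ i, 0 < L i)
    (g h : Fin N → ℝ) (hh : ∑ i, h i = 0) :
    (∑ i, g i * h i) ^ 2 ≤
      (∑ i, g i ^ 2 / L i - (∑ i, g i / L i) ^ 2 / (∑ i, 1 / L i)) *
        (∑ i, L i * h i ^ 2) := by
  have hne : (Finset.univ : Finset (Fin N)).Nonempty := ⟨⟨0, hNpos⟩, Finset.mem_univ _⟩
  set σ : ℝ := ∑ i, 1 / L i with hσdef
  have hσpos : 0 < σ := Finset.sum_pos (fun i _ => by have := hL i; positivity) hne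
  set c : ℝ := (∑ i, g i / L i) / σ with hc
  have hcs := Finset.sum_mul_sq_le_sq_mul_sq Finset.univ
    (fun i : Fin N => (g i - c) / Real.sqrt (L i)) (fun i => Real.sqrt (L i) * h i)
  have hab : ∀ i : Fin N, (g i - c) / Real.sqrt (L i) * (Real.sqrt (L i) * h i)
      = (g i - c) * h i := by
    intro i
    have hs : Real.sqrt (L i) ≠ 0 := ne_of_gt (Real.sqrt_pos.2 (hL i))
    field_simp
  have ha : ∀ i : Fin N, ((g i - c) / Real.sqrt (L i)) ^ 2 = (g i - c) ^ 2 / L i := by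
    intro i; rw [div_pow, Real.sq_sqrt (hL i).le]
  have hb : ∀ i : Fin N, (Real.sqrt (L i) * h i) ^ 2 = L i * h i ^ 2 := by
    intro i; rw [mul_pow, Real.sq_sqrt (hL i).le]
  simp_rw [hab, ha, hb] at hcs
  have h1 : ∑ i, (g i - c) * h i = ∑ i, g i * h i := by
    simp_rw [sub_mul]
    rw [Finset.sum_sub_distrib, ← Finset.mul_sum, hh, mul_zero, sub_zero]
  have h2 : ∑ i, (g i - c) ^ 2 / L i
      = ∑ i, g i ^ 2 / L i - (∑ i, g i / L i) ^ 2 / σ := by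
    have hexp : ∀ i : Fin N, (g i - c) ^ 2 / L i
        = g i ^ 2 / L i - 2 * c * (g i / L i) + c ^ 2 * (1 / L i) := by
      intro i
      have hLne := (hL i).ne'
      field_simp
      ring
    simp_rw [hexp]
    rw [Finset.sum_add_distrib, Finset.sum_sub_distrib, ← Finset.mul_sum, ← Finset.mul_sum]
    rw [hc]
    field_simp
    ring
  rw [h1, h2] at hcs
  exact hcs

lemma quad_form_eq {N : ℕ} (L : Fin N → ℝ) (hL : ∀ i, 0 < L i) (α : ℝ) (g : Fin N → ℝ) :
    ∑ i, ∑ j, g i * ((α • Matrix.of (fun i j : Fin N =>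
        (if i = j then 1 / L i else 0) - (1 / (L i * L j)) / (∑ k, 1 / L k))) i j) * g j
      = α * (∑ i, g i ^ 2 / L i - (∑ i, g i / L i) ^ 2 / (∑ k, 1 / L k)) := by
  set σ : ℝ := ∑ k, 1 / L k with hσdef
  have hterm : ∀ i j : Fin N,
      g i * ((α • Matrix.of (fun i j : Fin N =>
        (if i = j then 1 / L i else 0) - (1 / (L i * L j)) / σ)) i j) * g j
      = α * ((if i = j then g i * g j / L i else 0) - (g i / L i) * ((g j / L j) / σ)) := by
    intro i j
    simp only [Matrix.smul_apply, Matrix.of_apply, smul_eq_mul]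
    have hi := (hL i).ne'
    have hj := (hL j).ne'
    by_cases hij : i = j
    · subst hij
      simp only [eq_self_iff_true, ↓reduceIte]
      field_simp
    · simp only [if_neg hij]
      field_simp
      ring
  simp_rw [hterm, ← Finset.mul_sum]
  congr 1
  have hrow : ∀ i : Fin N, ∑ j, ((if i = j then g i * g j / L i else 0)
      - (g i / L i) * ((g j / L j) / σ))
      = g i ^ 2 / L i - (g i / L i) * ((∑ j, g j / L j) / σ) := by
    intro i
    rw [Finset.sum_sub_distrib, Finset.sum_ite_eq, ← Finset.mul_sum, ← Finset.sum_div]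
    simp [sq]
  simp_rw [hrow]
  rw [Finset.sum_sub_distrib, ← Finset.sum_mul, mul_div_assoc', ← sq]

/-- Sublinear rate
`E[f(X_k)] − f* ≤ ((N−1)/(τ−1)) · 2 ∑_i L_i R_i² / k` for the random descent
scheme with the matrix `G = ((τ−1)/(N−1)) (D_L⁻¹ − (1/∑_i 1/L_i) ℓℓᵀ)`. -/
theorem stmt_15 (N τ : ℕ) (hN : 2 ≤ N) (hτ1 : 2 ≤ τ) (hτ2 : τ ≤ N)
    (L : Fin N → ℝ) (hL : ∀ i, 0 < L i)
    (G : Matrix (Fin N) (Fin N) ℝ)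
    (hG : G = (((τ : ℝ) - 1) / ((N : ℝ) - 1)) • Matrix.of (fun i j : Fin N =>
      (if i = j then 1 / L i else 0) - (1 / (L i * L j)) / (∑ k, 1 / L k)))
    (f : (Fin N → ℝ) → ℝ) (hconv : ConvexOn ℝ Set.univ f)
    (hdiff : Differentiable ℝ f)
    (fstar : ℝ)
    (hattain : ∃ xs : Fin N → ℝ, (∑ i, xs i = 0) ∧ f xs = fstar ∧
      ∀ x : Fin N → ℝ, (∑ i, x i = 0) → fstar ≤ f x)
    (x0 : Fin N → ℝ) (hx0 : ∑ i, x0 i = 0)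
    (R : Fin N → ℝ) (hR : ∀ i, 0 < R i)
    (hRad : ∀ x : Fin N → ℝ, (∑ i, x i = 0) → f x ≤ f x0 →
      ∃ xs : Fin N → ℝ, (∑ i, xs i = 0) ∧ f xs = fstar ∧
        ∀ i, |x i - xs i| ≤ R i)
    {Ω : Type} [MeasurableSpace Ω] (μ : Measure Ω) [IsProbabilityMeasure μ]
    (𝓕 : Filtration ℕ ‹MeasurableSpace Ω›)
    (X : ℕ → Ω → (Fin N → ℝ)) (hadapt : Adapted 𝓕 X)
    (hX0 : ∀ᵐ ω ∂μ, X 0 ω = x0)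
    (hint : ∀ k, Integrable (fun ω => f (X k ω)) μ)
    (hfeas : ∀ k, ∀ᵐ ω ∂μ, ∑ i, X k ω i = 0)
    (hdec : ∀ k, ∀ᵐ ω ∂μ, f (X (k + 1) ω) ≤ f (X k ω))
    (hexp : ∀ k, ∀ᵐ ω ∂μ,
      (μ[(fun ω' => f (X (k + 1) ω')) | 𝓕 k]) ω ≤ f (X k ω) -
        (1 / 2) * ∑ i, ∑ j,
          gradVec N f (X k ω) i * G i j * gradVec N f (X k ω) j) :
    ∀ k : ℕ, 1 ≤ k → (∫ ω, f (X k ω) ∂μ) - fstar ≤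
      (((N : ℝ) - 1) / ((τ : ℝ) - 1)) * (2 * ∑ i, L i * (R i) ^ 2) / k := by
  obtain ⟨xsa, hxsa0, hxsaf, hxsmin⟩ := hattain
  have hNpos : 0 < N := lt_of_lt_of_le two_pos hN
  have hτR : (2:ℝ) ≤ (τ:ℝ) := by exact_mod_cast hτ1
  have hNR : (2:ℝ) ≤ (N:ℝ) := by exact_mod_cast hN
  set α : ℝ := ((τ:ℝ)-1)/((N:ℝ)-1) with hα
  have hαpos : 0 < α := div_pos (by linarith) (by linarith)
  set Rsq : ℝ := ∑ i, L i * R i ^ 2 with hRsq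
  have hRsqpos : 0 < Rsq :=
    Finset.sum_pos (fun i _ => by have := hL i; have := hR i; positivity)
      ⟨⟨0, hNpos⟩, Finset.mem_univ _⟩
  set c : ℝ := α / (2 * Rsq) with hc
  have hcpos : 0 < c := by positivity
  have hfstar_le_fx0 : fstar ≤ f x0 := hxsmin x0 hx0
  -- a.e. monotone bound
  have hle_x0 : ∀ k, ∀ᵐ ω ∂μ, f (X k ω) ≤ f x0 := by
    intro k
    filter_upwards [hX0, ae_all_iff.2 hdec] with ω h1 h3
    have : ∀ m, f (X m ω) ≤ f x0 := by
      intro m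
      induction m with
      | zero => rw [h1]
      | succ n ih => exact le_trans (h3 n) ih
    exact this k
  have hge_fstar : ∀ k, ∀ᵐ ω ∂μ, fstar ≤ f (X k ω) := by
    intro k
    filter_upwards [hfeas k] with ω h
    exact hxsmin _ h
  -- integrability of squared deviation
  have hmeas : ∀ k, AEStronglyMeasurable (fun ω => f (X k ω)) μ := fun k => (hint k).1
  have hintsq : ∀ k, Integrable (fun ω => (f (X k ω) - fstar) ^ 2) μ := by
    intro k
    refine Integrable.mono'
      (g := fun ω => (f x0 - fstar) * (f (X k ω) - fstar)) ?_ ?_ ?_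
    · exact ((hint k).sub (integrable_const fstar)).const_mul _
    · have h := (hmeas k).sub (aestronglyMeasurable_const (b := fstar))
      have := h.mul h
      simp only [pow_two]; exact this
    · filter_upwards [hle_x0 k, hge_fstar k] with ω hub hlb
      rw [Real.norm_eq_abs, abs_of_nonneg (sq_nonneg _)]
      nlinarith
  -- Jensen
  have hjensen : ∀ k, ((∫ ω, f (X k ω) ∂μ) - fstar) ^ 2
      ≤ ∫ ω, (f (X k ω) - fstar) ^ 2 ∂μ := by
    intro k
    have hZint : Integrable (fun ω => f (X k ω) - fstar) μ :=
      (hint k).sub (integrable_const _)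
    set m : ℝ := ∫ ω, (f (X k ω) - fstar) ∂μ with hm
    have hmean : (∫ ω, f (X k ω) ∂μ) - fstar = m := by
      rw [hm, integral_sub (hint k) (integrable_const _), integral_const]
      simp
    have hvar : 0 ≤ ∫ ω, ((f (X k ω) - fstar) - m) ^ 2 ∂μ :=
      integral_nonneg fun ω => sq_nonneg _
    have hexpand : ∫ ω, ((f (X k ω) - fstar) - m) ^ 2 ∂μ
        = (∫ ω, (f (X k ω) - fstar) ^ 2 ∂μ) - m ^ 2 := by
      have hptm : ∀ ω, ((f (X k ω) - fstar) - m) ^ 2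
          = (f (X k ω) - fstar) ^ 2 - (2 * m) * (f (X k ω) - fstar) + m ^ 2 := by
        intro ω; ring
      simp_rw [hptm]
      have hA : Integrable (fun ω => (f (X k ω) - fstar) ^ 2
          - 2 * m * (f (X k ω) - fstar)) μ := (hintsq k).sub (hZint.const_mul _)
      have hB : Integrable (fun ω => 2 * m * (f (X k ω) - fstar)) μ :=
        hZint.const_mul _
      rw [integral_add hA (integrable_const _), integral_sub (hintsq k) hB,
        integral_const_mul, integral_const]
      simp only [measure_univ, ENNReal.toReal_one, probReal_univ, smul_eq_mul, one_mul, ← hm]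
      ring
    rw [hmean]
    linarith [hexpand ▸ hvar]
  -- key pointwise inequality
  have hkey : ∀ x : Fin N → ℝ, (∑ i, x i = 0) → f x ≤ f x0 →
      2 * c * (f x - fstar) ^ 2
        ≤ ∑ i, ∑ j, gradVec N f x i * G i j * gradVec N f x j := by
    intro x hxS hxle
    obtain ⟨xs, hxs0, hxsf, hxsR⟩ := hRad x hxS hxle
    set g : Fin N → ℝ := gradVec N f x with hgdef
    set Q : ℝ := ∑ i, g i ^ 2 / L i - (∑ i, g i / L i) ^ 2 / (∑ k, 1 / L k) with hQ
    have hform : ∑ i, ∑ j, g i * G i j * g j = α * Q := by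
      rw [hG]; exact quad_form_eq L hL α g
    have hσpos : 0 < ∑ i, 1 / L i :=
      Finset.sum_pos (fun i _ => by have := hL i; positivity)
        ⟨⟨0, hNpos⟩, Finset.mem_univ _⟩
    have hQ0 : 0 ≤ Q := by
      rw [hQ]
      have := Q_nonneg' L hL g hσpos
      linarith
    have hfge : 0 ≤ f x - fstar := by
      have := hxsmin x hxS; linarith
    -- gradient inequality
    have hgrad : f x - fstar ≤ ∑ i, g i * (x i - xs i) := by
      have h1 := grad_ineq_aux hconv hdiff x xs
      rw [fderiv_eq_sum] at h1
      have h2 : ∑ i, (xs - x) i * gradVec N f x i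
          = - ∑ i, g i * (x i - xs i) := by
        rw [← Finset.sum_neg_distrib]
        refine Finset.sum_congr rfl fun i _ => ?_
        simp only [Pi.sub_apply, hgdef]
        ring
      rw [h2, hxsf] at h1
      linarith
    -- Cauchy-Schwarz
    have hhsum : ∑ i, (x i - xs i) = 0 := by
      rw [Finset.sum_sub_distrib, hxS, hxs0, sub_zero]
    have hCS := key_quad hNpos L hL g (fun i => x i - xs i) hhsum
    have hRb : ∑ i, L i * (x i - xs i) ^ 2 ≤ Rsq := by
      rw [hRsq]
      refine Finset.sum_le_sum fun i _ => ?_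
      have h1 := hxsR i
      have h2 := (hL i).le
      have h3 : (x i - xs i) ^ 2 ≤ R i ^ 2 := by
        rw [← sq_abs]
        exact pow_le_pow_left₀ (abs_nonneg _) h1 2
      exact mul_le_mul_of_nonneg_left h3 h2
    have hsq : (f x - fstar) ^ 2 ≤ Q * Rsq := by
      have h1 : (f x - fstar) ^ 2 ≤ (∑ i, g i * (x i - xs i)) ^ 2 :=
        pow_le_pow_left₀ hfge hgrad 2
      have h2 : (∑ i, g i * (x i - xs i)) ^ 2
          ≤ Q * (∑ i, L i * (x i - xs i) ^ 2) := hCS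
      have h3 : Q * (∑ i, L i * (x i - xs i) ^ 2) ≤ Q * Rsq :=
        mul_le_mul_of_nonneg_left hRb hQ0
      linarith
    rw [hform]
    have hfinal : 2 * c * (f x - fstar) ^ 2 = α * ((f x - fstar) ^ 2 / Rsq) := by
      rw [hc]; field_simp
    rw [hfinal]
    refine mul_le_mul_of_nonneg_left ?_ hαpos.le
    rw [div_le_iff₀ hRsqpos]
    linarith [hsq]
  -- the expected decrease
  set Δ : ℕ → ℝ := fun k => (∫ ω, f (X k ω) ∂μ) - fstar with hΔ
  have hΔnonneg : ∀ k, 0 ≤ Δ k := by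
    intro k
    have h := integral_mono_ae (integrable_const fstar) (hint k) (hge_fstar k)
    simp only [integral_const, measure_univ, ENNReal.toReal_one, probReal_univ, smul_eq_mul,
      one_mul] at h
    simp only [hΔ]
    linarith
  have hΔdec : ∀ k, Δ (k+1) ≤ Δ k := by
    intro k
    have h := integral_mono_ae (hint (k+1)) (hint k) (hdec k)
    simp only [hΔ]
    linarith
  have hrec : ∀ k, Δ (k+1) ≤ Δ k - c * Δ k ^ 2 := by
    intro k
    have hptwise : ∀ᵐ ω ∂μ, (μ[(fun ω' => f (X (k+1) ω')) | 𝓕 k]) ω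
        ≤ f (X k ω) - c * (f (X k ω) - fstar) ^ 2 := by
      filter_upwards [hexp k, hfeas k, hle_x0 k] with ω h1 h2 h3
      have h4 := hkey (X k ω) h2 h3
      linarith
    have hci : Integrable (fun ω => (μ[(fun ω' => f (X (k+1) ω')) | 𝓕 k]) ω) μ :=
      integrable_condExp
    have hrhsint : Integrable
        (fun ω => f (X k ω) - c * (f (X k ω) - fstar) ^ 2) μ :=
      (hint k).sub ((hintsq k).const_mul c)
    have hmono := integral_mono_ae hci hrhsint hptwise
    rw [integral_condExp (𝓕.le k)] at hmono
    rw [integral_sub (hint k) ((hintsq k).const_mul c), integral_const_mul] at hmono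
    have hj := hjensen k
    have h5 : c * ((∫ ω, f (X k ω) ∂μ) - fstar) ^ 2
        ≤ c * ∫ ω, (f (X k ω) - fstar) ^ 2 ∂μ :=
      mul_le_mul_of_nonneg_left hj hcpos.le
    simp only [hΔ]
    linarith
  -- recursion inversion
  have hinv : ∀ k : ℕ, 0 < Δ k → c * k ≤ 1 / Δ k := by
    intro k
    induction k with
    | zero =>
      intro h
      simp only [Nat.cast_zero, mul_zero]
      positivity
    | succ n ih =>
      intro h
      have hΔn : 0 < Δ n := lt_of_lt_of_le h (hΔdec n)
      have h1 := ih hΔn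
      have h2 := hrec n
      have h3 : 1 / Δ n + c ≤ 1 / Δ (n+1) := by
        rw [div_add' _ _ _ (ne_of_gt hΔn), div_le_div_iff₀ hΔn h]
        nlinarith [hΔdec n, sq_nonneg (Δ n), mul_pos hcpos hΔn]
      push_cast
      linarith
  -- conclusion
  intro k hk
  have hkpos : (0:ℝ) < k := by exact_mod_cast hk
  have hRHS : (((N : ℝ) - 1) / ((τ : ℝ) - 1)) * (2 * Rsq) / k = 1 / (c * k) := by
    rw [hc, hα]
    have h1 : ((τ:ℝ) - 1) ≠ 0 := by linarith
    have h2 : ((N:ℝ) - 1) ≠ 0 := by linarith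
    field_simp
  rw [hRHS]
  show Δ k ≤ 1 / (c * k)
  rcases le_or_gt (Δ k) 0 with hle | hpos
  · refine le_trans hle ?_
    positivity
  · have h1 := hinv k hpos
    rw [le_div_iff₀ (by positivity : (0:ℝ) < c * k)]
    have h2 : c * k * Δ k ≤ (1 / Δ k) * Δ k :=
      mul_le_mul_of_nonneg_right h1 hpos.le
    rw [one_div, inv_mul_cancel₀ (ne_of_gt hpos)] at h2
    linarith
end

section
/- Let N ≥ 2, let G be an N×N symmetric positive semidefinite real matrix with G e = 0, let ζ ≥ 0, let ν ∈ ℝ^N have all entries ν_i > 0, and let R_1, …, R_N > 0. Suppose G + ζ e eᵀ ⪰ D_ν^{-1}, where D_ν is the diagonal matrix with diagonal entries ν_1, …, ν_N and ⪰ denotes the positive semidefinite (Loewner) order. Then for every x ∈ S with |x_i| ≤ R_i for all i, ( sup{⟨x,u⟩ : u ∈ ℝ^N, uᵀGu ≤ 1} )² ≤ Σ_{i=1}^N ν_i R_i². -/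
/-- If `G + ζ e eᵀ ⪰ D_ν⁻¹` then, for every `x ∈ S` with
`|x_i| ≤ R_i`, the squared dual norm of `x` is at most `∑_i ν_i R_i²`. -/
theorem stmt_16 (N : ℕ) (hN : 2 ≤ N) (G : Matrix (Fin N) (Fin N) ℝ)
    (hsym : G.IsSymm) (hpsd : G.PosSemidef)
    (hGe : G.mulVec (fun _ => (1 : ℝ)) = 0)
    (ζ : ℝ) (hζ : 0 ≤ ζ) (ν : Fin N → ℝ) (hν : ∀ i, 0 < ν i)
    (R : Fin N → ℝ) (hR : ∀ i, 0 < R i)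
    (hLMI : (G + ζ • Matrix.of (fun _ _ : Fin N => (1 : ℝ))
      - Matrix.diagonal (fun i => (ν i)⁻¹)).PosSemidef)
    (x : Fin N → ℝ) (hx : ∑ i, x i = 0) (hxR : ∀ i, |x i| ≤ R i) :
    (sSup {r : ℝ | ∃ u : Fin N → ℝ,
        (∑ i, ∑ j, u i * G i j * u j) ≤ 1 ∧ r = ∑ i, x i * u i}) ^ 2
      ≤ ∑ i, ν i * (R i) ^ 2 := by
  set C : ℝ := ∑ i, ν i * (R i) ^ 2 with hCdef
  have hC : 0 ≤ C := Finset.sum_nonneg fun i _ =>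
    mul_nonneg (hν i).le (sq_nonneg _)
  set T : Set ℝ := {r : ℝ | ∃ u : Fin N → ℝ,
      (∑ i, ∑ j, u i * G i j * u j) ≤ 1 ∧ r = ∑ i, x i * u i} with hTdef
  have hrow : ∀ i, ∑ j, G i j = 0 := by
    intro i
    have := congrFun hGe i
    simpa [Matrix.mulVec, dotProduct] using this
  have hcol : ∀ j, ∑ i, G i j = 0 := by
    intro j
    have hs : ∀ i, G i j = G j i := fun i => (congrFun (congrFun hsym j) i)
    simp only [hs]
    exact hrow j
  have hNpos : (0 : ℝ) < N := by positivity
  -- main bound: every element of T is ≤ √C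
  have hbound : ∀ r ∈ T, r ≤ Real.sqrt C := by
    rintro r ⟨u, hu, rfl⟩
    set m : ℝ := (∑ i, u i) / N with hm
    set v : Fin N → ℝ := fun i => u i - m with hv
    have hvsum : ∑ i, v i = 0 := by
      simp only [hv, Finset.sum_sub_distrib, Finset.sum_const, Finset.card_univ,
        Fintype.card_fin, nsmul_eq_mul, hm]
      field_simp
      ring
    -- x·u = x·v
    have hxu : ∑ i, x i * u i = ∑ i, x i * v i := by
      simp only [hv, mul_sub, Finset.sum_sub_distrib, ← Finset.sum_mul, hx,
        zero_mul, sub_zero]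
    -- vᵀGv = uᵀGu
    have hw : ∀ i, ∑ j, G i j * v j = ∑ j, G i j * u j := by
      intro i
      simp only [hv, mul_sub, Finset.sum_sub_distrib, ← Finset.sum_mul, hrow i,
        zero_mul, sub_zero]
    have hwsum : ∑ i, (∑ j, G i j * u j) = 0 := by
      rw [Finset.sum_comm]
      simp only [← Finset.sum_mul, hcol, zero_mul, Finset.sum_const_zero]
    have e1 : ∀ (y : Fin N → ℝ), ∀ i, (∑ j, y i * G i j * y j)
        = y i * ∑ j, G i j * y j := by
      intro y i
      rw [Finset.mul_sum]
      exact Finset.sum_congr rfl fun j _ => by ring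
    have hq : ∑ i, ∑ j, v i * G i j * v j = ∑ i, ∑ j, u i * G i j * u j := by
      simp only [e1 v, e1 u, hw]
      simp only [hv, sub_mul, Finset.sum_sub_distrib]
      rw [← Finset.mul_sum, hwsum, mul_zero, sub_zero]
    -- apply LMI to v
    have h0 : (0 : ℝ) ≤ ∑ i, v i *
        ∑ j, (G i j + ζ * 1 - (if i = j then (ν i)⁻¹ else 0)) * v j := by
      have := hLMI.dotProduct_mulVec_nonneg v
      simpa [dotProduct, Matrix.mulVec, Matrix.sub_apply,
        Matrix.add_apply, Matrix.smul_apply, Matrix.diagonal_apply,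
        Matrix.of_apply, smul_eq_mul] using this
    have h1 : ∑ i, v i *
        ∑ j, (G i j + ζ * 1 - (if i = j then (ν i)⁻¹ else 0)) * v j
        = (∑ i, ∑ j, v i * G i j * v j)
          + ζ * ((∑ i, v i) * (∑ j, v j))
          - ∑ i, (ν i)⁻¹ * (v i) ^ 2 := by
      have step : ∀ i, v i *
          ∑ j, (G i j + ζ * 1 - (if i = j then (ν i)⁻¹ else 0)) * v j
          = (∑ j, v i * G i j * v j) + ζ * (v i * ∑ j, v j)
            - (ν i)⁻¹ * (v i) ^ 2 := by
        intro i
        rw [Finset.mul_sum, Finset.mul_sum]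
        have : ∀ j, v i * ((G i j + ζ * 1 - (if i = j then (ν i)⁻¹ else 0)) * v j)
            = v i * G i j * v j + ζ * (v i * v j)
              - (if i = j then (ν i)⁻¹ * (v i * v j) else 0) := by
          intro j
          by_cases h : i = j <;> simp [h] <;> ring
        simp only [this, Finset.sum_sub_distrib, Finset.sum_add_distrib,
          Finset.sum_ite_eq, Finset.mem_univ, if_true, ← Finset.mul_sum]
        ring
      simp only [step, Finset.sum_sub_distrib, Finset.sum_add_distrib,
        ← Finset.mul_sum]
      rw [← Finset.sum_mul]
    rw [h1, hvsum, hq] at h0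
    -- key: ∑ (ν i)⁻¹ v i ^ 2 ≤ 1
    have hkey : ∑ i, (ν i)⁻¹ * (v i) ^ 2 ≤ 1 := by nlinarith
    -- Cauchy–Schwarz
    have hcs : (∑ i, x i * v i) ^ 2
        ≤ (∑ i, ν i * (x i) ^ 2) * (∑ i, (ν i)⁻¹ * (v i) ^ 2) := by
      have := Finset.sum_mul_sq_le_sq_mul_sq Finset.univ
        (fun i => Real.sqrt (ν i) * x i) (fun i => (Real.sqrt (ν i))⁻¹ * v i)
      have heq1 : ∀ i, (Real.sqrt (ν i) * x i) * ((Real.sqrt (ν i))⁻¹ * v i)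
          = x i * v i := by
        intro i
        have hne : Real.sqrt (ν i) ≠ 0 := ne_of_gt (Real.sqrt_pos.mpr (hν i))
        field_simp
      have heq2 : ∀ i, (Real.sqrt (ν i) * x i) ^ 2 = ν i * (x i) ^ 2 := by
        intro i
        rw [mul_pow, Real.sq_sqrt (hν i).le]
      have heq3 : ∀ i, ((Real.sqrt (ν i))⁻¹ * v i) ^ 2 = (ν i)⁻¹ * (v i) ^ 2 := by
        intro i
        rw [mul_pow, ← Real.sqrt_inv, Real.sq_sqrt (inv_nonneg.mpr (hν i).le)]
      simpa only [heq1, heq2, heq3] using this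
    have hxC : ∑ i, ν i * (x i) ^ 2 ≤ C := by
      refine Finset.sum_le_sum fun i _ => ?_
      have : (x i) ^ 2 ≤ (R i) ^ 2 := by
        rw [← sq_abs]
        exact pow_le_pow_left₀ (abs_nonneg _) (hxR i) 2
      exact mul_le_mul_of_nonneg_left this (hν i).le
    have hsq : (∑ i, x i * v i) ^ 2 ≤ C := by
      calc (∑ i, x i * v i) ^ 2
          ≤ (∑ i, ν i * (x i) ^ 2) * (∑ i, (ν i)⁻¹ * (v i) ^ 2) := hcs
        _ ≤ C * 1 := by
            refine mul_le_mul hxC hkey ?_ hC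
            exact Finset.sum_nonneg fun i _ =>
              mul_nonneg (inv_nonneg.mpr (hν i).le) (sq_nonneg _)
        _ = C := mul_one _
    rw [hxu]
    calc ∑ i, x i * v i ≤ |∑ i, x i * v i| := le_abs_self _
      _ ≤ Real.sqrt C := Real.abs_le_sqrt hsq
  have hne : T.Nonempty := ⟨0, fun _ => 0, by simp, by simp⟩
  have hbdd : BddAbove T := ⟨Real.sqrt C, hbound⟩
  have h3 : sSup T ≤ Real.sqrt C := csSup_le hne hbound
  have h4 : 0 ≤ sSup T := le_csSup hbdd ⟨fun _ => 0, by simp, by simp⟩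
  calc (sSup T) ^ 2 ≤ (Real.sqrt C) ^ 2 := pow_le_pow_left₀ h4 h3 2
    _ = C := Real.sq_sqrt hC
end

section
/- Let n ≥ 1 and N ≥ 1, let Q_1, …, Q_N ⊆ ℝ^n be convex sets, let σ_1, …, σ_N > 0, and let g_i : ℝ^n → ℝ be σ_i-strongly convex for each i, i.e. g_i(t u + (1−t) w) ≤ t g_i(u) + (1−t) g_i(w) − (σ_i/2) t (1−t) ‖u − w‖² for all u, w ∈ ℝ^n and t ∈ [0,1]. Let v* ∈ ∩_{i=1}^N Q_i. For x_i ∈ ℝ^n, let u_i(x_i) ∈ Q_i be a minimizer of u ↦ g_i(u) − ⟨x_i, u⟩ over Q_i. Then for every x = (x_1, …, x_N) ∈ (ℝ^n)^N with Σ_{i=1}^N x_i = 0, (1/2) Σ_{i=1}^N σ_i ‖u_i(x_i) − v*‖² ≤ Σ_{i=1}^N g_i(v*) − Σ_{i=1}^N ( g_i(u_i(x_i)) − ⟨x_i, u_i(x_i)⟩ ). -/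
open RealInnerProductSpace

/-- Limit lemma: if `A + σ/2*(1-t)*c ≤ B` for all `t ∈ (0,1)`, then `A + σ/2*c ≤ B`. -/
lemma aux_limit (A B c s : ℝ)
    (h : ∀ t ∈ Set.Ioo (0:ℝ) 1, A + s / 2 * (1 - t) * c ≤ B) :
    A + s / 2 * c ≤ B := by
  have hne : (nhdsWithin (0:ℝ) (Set.Ioo 0 1)).NeBot := by
    apply IsGLB.nhdsWithin_neBot
    · exact isGLB_Ioo one_pos
    · exact Set.nonempty_Ioo.mpr one_pos
  have htend : Filter.Tendsto (fun t : ℝ => A + s / 2 * (1 - t) * c)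
      (nhdsWithin 0 (Set.Ioo 0 1)) (nhds (A + s / 2 * c)) := by
    have : Filter.Tendsto (fun t : ℝ => A + s / 2 * (1 - t) * c)
        (nhds 0) (nhds (A + s / 2 * (1 - 0) * c)) := by
      apply Continuous.tendsto
      continuity
    simpa using this.mono_left nhdsWithin_le_nhds
  exact le_of_tendsto htend (eventually_nhdsWithin_of_forall h)

/-- Strong convexity of the primal objectives yields the bound
`(1/2) ∑_i σ_i ‖u_i(x_i) − v*‖² ≤ ∑_i g_i(v*) − ∑_i (g_i(u_i(x_i)) − ⟨x_i, u_i(x_i)⟩)`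
for every dual variable `x` with `∑_i x_i = 0`. -/
theorem stmt_18 (n N : ℕ) (hn : 1 ≤ n) (hN : 1 ≤ N)
    (Q : Fin N → Set (EuclideanSpace ℝ (Fin n))) (hQ : ∀ i, Convex ℝ (Q i))
    (σ : Fin N → ℝ) (hσ : ∀ i, 0 < σ i)
    (g : Fin N → EuclideanSpace ℝ (Fin n) → ℝ)
    (hg : ∀ i, ∀ u w : EuclideanSpace ℝ (Fin n), ∀ t : ℝ, 0 ≤ t → t ≤ 1 →
      g i (t • u + (1 - t) • w) ≤
        t * g i u + (1 - t) * g i w - (σ i / 2) * t * (1 - t) * ‖u - w‖ ^ 2)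
    (vstar : EuclideanSpace ℝ (Fin n)) (hv : ∀ i, vstar ∈ Q i)
    (x : Fin N → EuclideanSpace ℝ (Fin n)) (hx : ∑ i, x i = 0)
    (u : Fin N → EuclideanSpace ℝ (Fin n))
    (hu : ∀ i, u i ∈ Q i ∧
      ∀ w ∈ Q i, g i (u i) - ⟪x i, u i⟫ ≤ g i w - ⟪x i, w⟫) :
    (1 / 2) * ∑ i, σ i * ‖u i - vstar‖ ^ 2 ≤
      (∑ i, g i vstar) - ∑ i, (g i (u i) - ⟪x i, u i⟫) := by
  -- per-index inequality
  have key : ∀ i, (g i (u i) - ⟪x i, u i⟫) + σ i / 2 * ‖u i - vstar‖ ^ 2 ≤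
      g i vstar - ⟪x i, vstar⟫ := by
    intro i
    apply aux_limit
    intro t ht
    obtain ⟨ht0, ht1⟩ := ht
    set wt := t • vstar + (1 - t) • u i with hwt
    have hwQ : wt ∈ Q i := (hQ i) (hv i) (hu i).1 ht0.le (by linarith) (by ring)
    have hmin := (hu i).2 wt hwQ
    have hconv := hg i vstar (u i) t ht0.le ht1.le
    have hinner : ⟪x i, wt⟫ = t * ⟪x i, vstar⟫ + (1 - t) * ⟪x i, u i⟫ := by
      simp [hwt, inner_add_right, inner_smul_right]
    have hnorm : ‖vstar - u i‖ = ‖u i - vstar‖ := norm_sub_rev _ _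
    rw [hnorm] at hconv
    have h1 : g i (u i) - ⟪x i, u i⟫ ≤
        t * g i vstar + (1 - t) * g i (u i)
          - (σ i / 2) * t * (1 - t) * ‖u i - vstar‖ ^ 2
          - (t * ⟪x i, vstar⟫ + (1 - t) * ⟪x i, u i⟫) := by
      calc g i (u i) - ⟪x i, u i⟫ ≤ g i wt - ⟪x i, wt⟫ := hmin
        _ = g i wt - (t * ⟪x i, vstar⟫ + (1 - t) * ⟪x i, u i⟫) := by rw [hinner]
        _ ≤ _ := by linarith
    nlinarith [h1, ht0]
  have hsum := Finset.sum_le_sum (fun i (_ : i ∈ Finset.univ) => key i)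
  have hinnersum : ∑ i, ⟪x i, vstar⟫ = 0 := by
    rw [← sum_inner, hx, inner_zero_left]
  have hexp : ∑ i, ((g i (u i) - ⟪x i, u i⟫) + σ i / 2 * ‖u i - vstar‖ ^ 2)
      = (∑ i, (g i (u i) - ⟪x i, u i⟫)) + (1/2) * ∑ i, σ i * ‖u i - vstar‖ ^ 2 := by
    rw [Finset.sum_add_distrib, Finset.mul_sum]
    congr 1
    exact Finset.sum_congr rfl (fun i _ => by ring)
  rw [hexp] at hsum
  have : ∑ i, (g i vstar - ⟪x i, vstar⟫) = ∑ i, g i vstar := by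
    rw [Finset.sum_sub_distrib, hinnersum, sub_zero]
  rw [this] at hsum
  linarith
end
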